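/- arXiv:2308.01122 — 4 statements merged into one kernel-verified Lean document; each statement's English description precedes it below -/
import Mathlib

section
/- (Biting lemma of Chacon.) Let Ω be a bounded open subset of ℝ^N and let (f_n)_n be a sequence in L¹(Ω) that is bounded in L¹-norm. Then there exist f ∈ L¹(Ω), a subsequence (f_{n_k})_k, and a sequence of measurable sets (E_j)_j with E_j ⊆ Ω, E_{j+1} ⊆ E_j for all j, and meas(E_j) → 0 as j → ∞, such that for every j, f_{n_k} converges to f weakly in L¹(Ω ∖ E_j), i.e. for every bounded measurable function g : Ω ∖ E_j → ℝ one has ∫_{Ω∖E_j} f_{n_k}·g dx → ∫_{Ω∖E_j} f·g dx as k → ∞. -/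
open MeasureTheory Filter Set Topology
open scoped ENNReal NNReal

local notation "⟪" x ", " y "⟫" => @inner ℝ _ _ x y

section helpers


/-- truncation of a real number at level `m` -/
noncomputable def trc (m : ℕ) (r : ℝ) : ℝ := max (-(m : ℝ)) (min r m)

/-- excess of a real number over level `m` -/
noncomputable def exc (m : ℕ) (r : ℝ) : ℝ := max (|r| - m) 0

lemma exc_nonneg (m : ℕ) (r : ℝ) : 0 ≤ exc m r := le_max_right _ _

lemma exc_le_abs (m : ℕ) (r : ℝ) : exc m r ≤ |r| := by
  unfold exc
  have : (0:ℝ) ≤ m := Nat.cast_nonneg m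
  rcases abs_nonneg r with h
  apply max_le <;> linarith

lemma exc_anti {m m' : ℕ} (h : m ≤ m') (r : ℝ) : exc m' r ≤ exc m r := by
  unfold exc
  have : (m:ℝ) ≤ m' := Nat.cast_le.2 h
  apply max_le
  · exact le_max_of_le_left (by linarith)
  · exact le_max_right _ _

lemma exc_eq_zero {m : ℕ} {r : ℝ} (h : |r| ≤ m) : exc m r = 0 := by
  unfold exc
  exact max_eq_right (by linarith)

lemma abs_trc_le (m : ℕ) (r : ℝ) : |trc m r| ≤ m := by
  unfold trc
  have h0 : (0:ℝ) ≤ m := Nat.cast_nonneg m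
  rw [abs_le]
  constructor
  · exact le_max_left _ _
  · exact max_le (by linarith) (le_trans (min_le_right _ _) le_rfl)

lemma abs_sub_trc (m : ℕ) (r : ℝ) : |r - trc m r| = exc m r := by
  unfold trc exc
  have h0 : (0:ℝ) ≤ m := Nat.cast_nonneg m
  rcases le_total r (-(m:ℝ)) with h1 | h1
  · have hmin : min r (m:ℝ) = r := min_eq_left (by linarith)
    rw [hmin, max_eq_left h1, abs_of_nonpos (by linarith), abs_of_nonpos (by linarith)]
    rw [max_eq_left (by linarith)]
    ring
  · rcases le_total r (m:ℝ) with h2 | h2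
    · have hmin : min r (m:ℝ) = r := min_eq_left h2
      rw [hmin, max_eq_right h1, sub_self, abs_zero]
      rw [max_eq_right]
      rcases le_total 0 r with h3 | h3
      · rw [abs_of_nonneg h3]; linarith
      · rw [abs_of_nonpos h3]; linarith
    · have hmin : min r (m:ℝ) = (m:ℝ) := min_eq_right h2
      rw [hmin, max_eq_right (by linarith), abs_of_nonneg (by linarith),
        abs_of_nonneg (by linarith), max_eq_left (by linarith)]

lemma abs_trc_sub_trc {m m' : ℕ} (h : m ≤ m') (r : ℝ) :
    |trc m' r - trc m r| = exc m r - exc m' r := by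
  unfold trc exc
  have h0 : (0:ℝ) ≤ m := Nat.cast_nonneg m
  have hmm : (m:ℝ) ≤ m' := Nat.cast_le.2 h
  rcases le_total r 0 with hr | hr
  · rw [abs_of_nonpos hr]
    rcases le_total r (-(m':ℝ)) with h1 | h1
    · rw [min_eq_left (by linarith), min_eq_left (by linarith), max_eq_left h1,
        max_eq_left (by linarith), max_eq_left (by linarith), max_eq_left (by linarith)]
      rw [abs_of_nonpos (by linarith)]
      ring
    · rcases le_total r (-(m:ℝ)) with h2 | h2
      · rw [min_eq_left (by linarith), min_eq_left (by linarith), max_eq_right h1,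
          max_eq_left h2, max_eq_left (by linarith), max_eq_right (by linarith)]
        rw [abs_of_nonpos (by linarith)]
        ring
      · rw [min_eq_left (by linarith), min_eq_left (by linarith), max_eq_right h1,
          max_eq_right h2, sub_self, abs_zero, max_eq_right (by linarith),
          max_eq_right (by linarith)]
        ring
  · rw [abs_of_nonneg hr]
    rcases le_total r (m:ℝ) with h1 | h1
    · rw [min_eq_left h1, min_eq_left (by linarith), max_eq_right (by linarith),
        max_eq_right (by linarith), sub_self, abs_zero, max_eq_right (by linarith),
        max_eq_right (by linarith)]
      ring
    · rcases le_total r (m':ℝ) with h2 | h2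
      · rw [min_eq_left h2, min_eq_right h1, max_eq_right (by linarith),
          max_eq_right (by linarith), abs_of_nonneg (by linarith),
          max_eq_left (by linarith), max_eq_right (by linarith)]
        ring
      · rw [min_eq_right h2, min_eq_right h1, max_eq_right (by linarith),
          max_eq_right (by linarith), abs_of_nonneg (by linarith),
          max_eq_left (by linarith), max_eq_left (by linarith)]
        ring

lemma measurable_trc {α : Type*} [MeasurableSpace α] {g : α → ℝ} (hg : Measurable g) (m : ℕ) :
    Measurable fun x => trc m (g x) := by
  unfold trc
  exact measurable_const.max ((hg.min measurable_const))

lemma measurable_exc {α : Type*} [MeasurableSpace α] {g : α → ℝ} (hg : Measurable g) (m : ℕ) :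
    Measurable fun x => exc m (g x) := by
  unfold exc
  exact ((hg.abs.sub measurable_const).max measurable_const)

lemma abs_sub_trc_le (m : ℕ) (r : ℝ) : |r| ≤ m + exc m r := by
  unfold exc
  rcases le_total (|r| - m) 0 with h | h
  · rw [max_eq_right h]; linarith
  · rw [max_eq_left h]; linarith

end helpers



/-- Diagonal extraction: countably many bounded real sequences admit a common
subsequence along which all of them converge. -/
lemma exists_subseq_forall_tendsto {ι : Type*} [Countable ι] (a : ℕ → ι → ℝ)
    (h : ∀ i, ∃ C, ∀ n, |a n i| ≤ C) :
    ∃ φ : ℕ → ℕ, StrictMono φ ∧ ∃ L : ι → ℝ,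
      ∀ i, Tendsto (fun n => a (φ n) i) atTop (𝓝 (L i)) := by
  choose C hC using h
  have hcpt : IsCompact (Set.pi (univ : Set ι) fun i => Icc (-(C i)) (C i)) :=
    isCompact_univ_pi fun i => isCompact_Icc
  have hmem : ∀ n, (fun i => a n i) ∈ Set.pi univ fun i => Icc (-(C i)) (C i) := by
    intro n i _
    exact abs_le.1 (hC i n)
  obtain ⟨L, -, φ, hφ, hconv⟩ := hcpt.tendsto_subseq hmem
  refine ⟨φ, hφ, L, fun i => ?_⟩
  have := (continuous_apply i).continuousAt.tendsto.comp hconv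
  exact this



/-- If a bounded sequence in a real Hilbert space has convergent inner products
against a dense set of vectors, then it converges weakly to some element. -/
lemma exists_weak_limit_of_dense {H : Type*} [NormedAddCommGroup H]
    [InnerProductSpace ℝ H] [CompleteSpace H]
    (u : ℕ → H) (C : ℝ) (hC : ∀ n, ‖u n‖ ≤ C)
    (D : Set H) (hD : Dense D)
    (hconv : ∀ v ∈ D, ∃ l : ℝ, Tendsto (fun n => ⟪u n, v⟫) atTop (𝓝 l)) :
    ∃ w : H, ∀ v : H, Tendsto (fun n => ⟪u n, v⟫) atTop (𝓝 ⟪w, v⟫) := by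
  have hC0 : 0 ≤ C := le_trans (norm_nonneg _) (hC 0)
  -- every inner product sequence converges
  have key : ∀ v : H, ∃ l : ℝ, Tendsto (fun n => ⟪u n, v⟫) atTop (𝓝 l) := by
    intro v
    have hcauchy : CauchySeq (fun n => ⟪u n, v⟫) := by
      rw [Metric.cauchySeq_iff]
      intro ε hε
      obtain ⟨v', hv'D, hv'⟩ : ∃ v' ∈ D, dist v v' < ε / (3 * (C + 1)) := by
        have := Metric.dense_iff.1 hD v (ε / (3 * (C + 1))) (by positivity)
        obtain ⟨v', hv'1, hv'2⟩ := this
        exact ⟨v', hv'2, Metric.mem_ball'.1 hv'1⟩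
      obtain ⟨l, hl⟩ := hconv v' hv'D
      have hl' := hl.cauchySeq
      rw [Metric.cauchySeq_iff] at hl'
      obtain ⟨N, hN⟩ := hl' (ε / 3) (by positivity)
      refine ⟨N, fun m hm n hn => ?_⟩
      have bnd : ∀ k, |⟪u k, v⟫ - ⟪u k, v'⟫| ≤ C * dist v v' := by
        intro k
        have : ⟪u k, v⟫ - ⟪u k, v'⟫ = ⟪u k, v - v'⟫ := by
          rw [inner_sub_right]
        rw [this]
        calc |⟪u k, v - v'⟫| ≤ ‖u k‖ * ‖v - v'‖ := abs_real_inner_le_norm _ _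
          _ ≤ C * ‖v - v'‖ := by
              exact mul_le_mul_of_nonneg_right (hC k) (norm_nonneg _)
          _ = C * dist v v' := by rw [dist_eq_norm]
      have hCd : C * dist v v' ≤ ε / 3 := by
        have h1 : C * dist v v' ≤ C * (ε / (3 * (C + 1))) :=
          mul_le_mul_of_nonneg_left hv'.le hC0
        have h2 : C * (ε / (3 * (C + 1))) ≤ ε / 3 := by
          rw [mul_div_assoc'] at *
          rw [div_le_div_iff₀ (by positivity) (by norm_num)]
          nlinarith
        linarith
      have := hN m hm n hn
      have d1 := bnd m
      have d2 := bnd n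
      rw [Real.dist_eq] at this ⊢
      have : |⟪u m, v⟫ - ⟪u n, v⟫| ≤ |⟪u m, v⟫ - ⟪u m, v'⟫| + |⟪u m, v'⟫ - ⟪u n, v'⟫|
          + |⟪u n, v'⟫ - ⟪u n, v⟫| := by
        have := abs_sub_le (⟪u m, v⟫) (⟪u m, v'⟫) (⟪u n, v⟫)
        have := abs_sub_le (⟪u m, v'⟫) (⟪u n, v'⟫) (⟪u n, v⟫)
        set a := ⟪u m, v⟫; set b := ⟪u m, v'⟫; set c := ⟪u n, v'⟫; set e := ⟪u n, v⟫
        calc |a - e| ≤ |a - b| + |b - e| := abs_sub_le _ _ _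
          _ ≤ |a - b| + (|b - c| + |c - e|) := by
              have := abs_sub_le b c e; linarith
          _ = |a - b| + |b - c| + |c - e| := by ring
      have hmn := hN m hm n hn
      rw [Real.dist_eq] at hmn
      have d2' : |⟪u n, v'⟫ - ⟪u n, v⟫| ≤ C * dist v v' := by
        rw [abs_sub_comm]; exact d2
      linarith
    exact cauchySeq_tendsto_of_complete hcauchy
  choose F hF using key
  -- F is linear and bounded
  have Fadd : ∀ v₁ v₂, F (v₁ + v₂) = F v₁ + F v₂ := by
    intro v₁ v₂
    refine tendsto_nhds_unique (hF (v₁ + v₂)) ?_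
    have := (hF v₁).add (hF v₂)
    simpa [inner_add_right] using this
  have Fsmul : ∀ (c : ℝ) v, F (c • v) = c * F v := by
    intro c v
    refine tendsto_nhds_unique (hF (c • v)) ?_
    have := (hF v).const_mul c
    simpa [inner_smul_right] using this
  have Fbdd : ∀ v, |F v| ≤ C * ‖v‖ := by
    intro v
    have : Tendsto (fun n => |⟪u n, v⟫|) atTop (𝓝 |F v|) := (hF v).abs
    refine le_of_tendsto this (Eventually.of_forall fun n => ?_)
    calc |⟪u n, v⟫| ≤ ‖u n‖ * ‖v‖ := abs_real_inner_le_norm _ _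
      _ ≤ C * ‖v‖ := mul_le_mul_of_nonneg_right (hC n) (norm_nonneg _)
  let Flin : H →ₗ[ℝ] ℝ :=
    { toFun := F, map_add' := Fadd, map_smul' := fun c v => by simp [Fsmul c v] }
  let Fcont : H →L[ℝ] ℝ := Flin.mkContinuous C fun v => by
    rw [Real.norm_eq_abs]; exact Fbdd v
  refine ⟨(InnerProductSpace.toDual ℝ H).symm Fcont, fun v => ?_⟩
  have : ⟪(InnerProductSpace.toDual ℝ H).symm Fcont, v⟫ = Fcont v := by
    simp [InnerProductSpace.toDual_symm_apply]
  rw [this]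
  exact hF v

set_option maxHeartbeats 2000000 in
/-- The biting lemma of Chacon. -/
theorem biting_lemma_of_chacon
    (N : ℕ) (Ω : Set (Fin N → ℝ)) (hΩo : IsOpen Ω) (hΩb : Bornology.IsBounded Ω)
    (f : ℕ → (Fin N → ℝ) → ℝ)
    (hint : ∀ n, IntegrableOn (f n) Ω volume)
    (hbd : ∃ M : ℝ, ∀ n, ∫ x in Ω, |f n x| ≤ M) :
    ∃ g : (Fin N → ℝ) → ℝ, IntegrableOn g Ω volume ∧
    ∃ φ : ℕ → ℕ, StrictMono φ ∧
    ∃ E : ℕ → Set (Fin N → ℝ),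
      (∀ j, MeasurableSet (E j) ∧ E j ⊆ Ω) ∧
      (∀ j, E (j + 1) ⊆ E j) ∧
      Tendsto (fun j => volume (E j)) atTop (nhds 0) ∧
      (∀ j, ∀ h : (Fin N → ℝ) → ℝ, Measurable h →
        (∃ M : ℝ, ∀ x ∈ Ω \ E j, |h x| ≤ M) →
        Tendsto (fun k => ∫ x in Ω \ E j, f (φ k) x * h x) atTop
          (nhds (∫ x in Ω \ E j, g x * h x))) := by
  classical
  obtain ⟨M, hM⟩ := hbd
  have hΩm : MeasurableSet Ω := hΩo.measurableSet
  have hΩfin : volume Ω < ⊤ := hΩb.measure_lt_top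
  set μ : Measure (Fin N → ℝ) := volume.restrict Ω with hμdef
  haveI : IsFiniteMeasure μ := ⟨by simpa [hμdef] using hΩfin⟩
  have hM0 : 0 ≤ M := le_trans (integral_nonneg fun x => abs_nonneg _) (hM 0)
  -- measurable representatives
  set fm : ℕ → (Fin N → ℝ) → ℝ := fun n => ((hint n).1.mk _) with hfmdef
  have hfm_meas : ∀ n, Measurable (fm n) := fun n =>
    ((hint n).1.stronglyMeasurable_mk).measurable
  have hfm_ae : ∀ n, f n =ᵐ[μ] fm n := fun n => (hint n).1.ae_eq_mk
  have hfm_int : ∀ n, Integrable (fm n) μ := fun n => (hint n).congr (hfm_ae n)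
  have hfm_bd : ∀ n, ∫ x, |fm n x| ∂μ ≤ M := by
    intro n
    have : (fun x => |f n x|) =ᵐ[μ] fun x => |fm n x| := (hfm_ae n).fun_comp abs
    rw [← integral_congr_ae this]
    exact hM n
  -- integrability of the excess functions
  have hexc_int : ∀ n m, Integrable (fun x => exc m (fm n x)) μ := by
    intro n m
    refine (hfm_int n).abs.mono (measurable_exc (hfm_meas n) m).aestronglyMeasurable ?_
    refine Eventually.of_forall fun x => ?_
    rw [Real.norm_eq_abs, Real.norm_eq_abs, abs_of_nonneg (exc_nonneg _ _),
      abs_abs]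
    exact exc_le_abs _ _
  -- the tail masses
  set A : ℕ → ℕ → ℝ := fun n m => ∫ x, exc m (fm n x) ∂μ with hAdef
  have hA_nonneg : ∀ n m, 0 ≤ A n m := fun n m =>
    integral_nonneg fun x => exc_nonneg _ _
  have hA_le : ∀ n m, A n m ≤ M := by
    intro n m
    refine le_trans (integral_mono (hexc_int n m) (hfm_int n).abs
      fun x => exc_le_abs _ _) (hfm_bd n)
  have hA_anti : ∀ n, ∀ {m m'}, m ≤ m' → A n m' ≤ A n m := by
    intro n m m' hmm
    exact integral_mono (hexc_int n m') (hexc_int n m) fun x => exc_anti hmm _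
  -- truncations as elements of L²
  have hV : ∀ n m, MemLp (fun x => trc m (fm n x)) 2 μ := by
    intro n m
    refine MemLp.of_bound (measurable_trc (hfm_meas n) m).aestronglyMeasurable
      (m : ℝ) (Eventually.of_forall fun x => ?_)
    rw [Real.norm_eq_abs]; exact abs_trc_le _ _
  set V : ℕ → ℕ → Lp ℝ 2 μ := fun n m => (hV n m).toLp _ with hVdef
  have hV_coe : ∀ n m, (V n m : (Fin N → ℝ) → ℝ) =ᵐ[μ] fun x => trc m (fm n x) :=
    fun n m => (hV n m).coeFn_toLp
  have hV_norm : ∀ m, ∃ B, ∀ n, ‖V n m‖ ≤ B := by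
    intro m
    refine ⟨_, fun n => Lp.norm_le_of_ae_bound (Nat.cast_nonneg m) ?_⟩
    filter_upwards [hV_coe n m] with x hx
    rw [hx, Real.norm_eq_abs]; exact abs_trc_le _ _
  -- a dense sequence in L²
  haveI hsepμ : MeasureTheory.IsSeparable μ := by infer_instance
  haveI : Fact ((2:ℝ≥0∞) ≠ ⊤) := ⟨by norm_num⟩
  haveI hsc : SecondCountableTopology (Lp ℝ 2 μ) :=
    MeasureTheory.Lp.SecondCountableTopology
  haveI : TopologicalSpace.SeparableSpace (Lp ℝ 2 μ) := by infer_instance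
  obtain ⟨e, he⟩ := TopologicalSpace.exists_dense_seq (Lp ℝ 2 μ)
  -- first extraction: all inner products and all tail masses converge
  obtain ⟨φ₁, hφ₁, L, hL⟩ := exists_subseq_forall_tendsto
    (a := fun n i => Sum.elim (fun p : ℕ × ℕ => ⟪V n p.1, e p.2⟫) (fun m => A n m) i)
    (by
      rintro (⟨m, i⟩ | m)
      · obtain ⟨B, hB⟩ := hV_norm m
        refine ⟨B * ‖e i‖, fun n => ?_⟩
        simp only [Sum.elim_inl]
        exact le_trans (abs_real_inner_le_norm _ _)
          (mul_le_mul_of_nonneg_right (hB n) (norm_nonneg _))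
      · refine ⟨M, fun n => ?_⟩
        simp only [Sum.elim_inr]
        rw [abs_le]
        exact ⟨le_trans (by linarith) (hA_nonneg n m), hA_le n m⟩)
  set d : ℕ → ℝ := fun m => L (Sum.inr m) with hddef
  have hAd : ∀ m, Tendsto (fun k => A (φ₁ k) m) atTop (𝓝 (d m)) := by
    intro m
    have := hL (Sum.inr m)
    simpa using this
  have hd_anti : Antitone d := by
    intro m m' hmm
    exact le_of_tendsto_of_tendsto' (hAd m') (hAd m) fun k => hA_anti _ hmm
  have hd_nonneg : ∀ m, 0 ≤ d m := fun m =>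
    ge_of_tendsto' (hAd m) fun k => hA_nonneg _ _ |>.trans le_rfl
  -- limit of the tail masses
  have hd_bdd : BddBelow (Set.range d) := ⟨0, by rintro x ⟨m, rfl⟩; exact hd_nonneg m⟩
  set dl : ℝ := ⨅ m, d m with hdldef
  have hdl : Tendsto d atTop (𝓝 dl) := tendsto_atTop_ciInf hd_anti hd_bdd
  have hdl_le : ∀ m, dl ≤ d m := fun m => ciInf_le hd_bdd m
  -- weak L² limits of the truncations
  have hweak : ∀ m, ∃ w : Lp ℝ 2 μ, ∀ v : Lp ℝ 2 μ,
      Tendsto (fun k => ⟪V (φ₁ k) m, v⟫) atTop (𝓝 ⟪w, v⟫) := by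
    intro m
    obtain ⟨B, hB⟩ := hV_norm m
    refine exists_weak_limit_of_dense (fun k => V (φ₁ k) m) B (fun k => hB _)
      (Set.range e) (dense_iff_closure_eq.2 he.closure_range) ?_
    rintro v ⟨i, rfl⟩
    exact ⟨L (Sum.inl (m, i)), by simpa using hL (Sum.inl (m, i))⟩
  choose g2 hg2 using hweak
  -- second extraction: bite levels
  have hev : ∀ i, ∀ᶠ k in atTop, d (2 ^ i) - (1/2 : ℝ) ^ i ≤ A (φ₁ k) (2 ^ i) := by
    intro i
    refine (hAd (2 ^ i)).eventually (eventually_ge_nhds ?_)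
    have : (0:ℝ) < (1/2 : ℝ) ^ i := by positivity
    linarith
  obtain ⟨κ, hκ, hbite⟩ := extraction_forall_of_eventually hev
  set φ : ℕ → ℕ := φ₁ ∘ κ with hφdef
  have hφ : StrictMono φ := hφ₁.comp hκ
  set wm : ℕ → (Fin N → ℝ) → ℝ := fun i => fm (φ i) with hwmdef
  have hAd' : ∀ m, Tendsto (fun k => A (φ k) m) atTop (𝓝 (d m)) := fun m =>
    (hAd m).comp hκ.tendsto_atTop
  have hg2' : ∀ m (v : Lp ℝ 2 μ),
      Tendsto (fun k => ⟪V (φ k) m, v⟫) atTop (𝓝 ⟪g2 m, v⟫) := fun m v =>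
    (hg2 m v).comp hκ.tendsto_atTop
  have hbite' : ∀ k, d (2 ^ k) - (1/2 : ℝ) ^ k ≤ A (φ k) (2 ^ k) := hbite
  -- the biting sets
  set S : ℕ → Set (Fin N → ℝ) := fun i => Ω ∩ {x | ((2:ℝ) ^ i) < |wm i x|} with hSdef
  have hS_meas : ∀ i, MeasurableSet (S i) :=
    fun i => hΩm.inter (measurableSet_lt measurable_const (hfm_meas _).abs)
  have hS_vol : ∀ i, volume (S i) ≤ ENNReal.ofReal M * (2⁻¹ : ℝ≥0∞) ^ i := by
    intro i
    have hSne : volume (S i) ≠ ⊤ :=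
      (lt_of_le_of_lt (measure_mono (inter_subset_left)) hΩfin).ne
    have hIntOn : IntegrableOn (fun x => |wm i x|) (S i) volume := by
      have : IntegrableOn (fun x => |wm i x|) Ω volume := (hfm_int (φ i)).abs
      exact this.mono_set inter_subset_left
    have step1 : (2:ℝ) ^ i * (volume (S i)).toReal ≤ ∫ x in S i, |wm i x| := by
      have := setIntegral_ge_of_const_le (hS_meas i) hSne (fun x hx => le_of_lt hx.2) hIntOn
      rw [smul_eq_mul, mul_comm] at this
      exact this
    have step2 : ∫ x in S i, |wm i x| ≤ ∫ x in Ω, |wm i x| := by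
      refine setIntegral_mono_set (hfm_int (φ i)).abs ?_ (HasSubset.Subset.eventuallyLE inter_subset_left)
      exact Eventually.of_forall fun x => abs_nonneg _
    have step3 : ∫ x in Ω, |wm i x| ≤ M := hfm_bd (φ i)
    have h2pos : (0:ℝ) < (2:ℝ) ^ i := by positivity
    have htoReal : (volume (S i)).toReal ≤ M * (2⁻¹:ℝ) ^ i := by
      rw [inv_pow, ← div_eq_mul_inv, le_div_iff₀ (by positivity)]
      nlinarith [step1.trans (step2.trans step3)]
    calc volume (S i) ≤ ENNReal.ofReal (M * (2⁻¹:ℝ) ^ i) :=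
          (ENNReal.le_ofReal_iff_toReal_le hSne (by positivity)).2 htoReal
      _ = ENNReal.ofReal M * (2⁻¹ : ℝ≥0∞) ^ i := by
          rw [ENNReal.ofReal_mul hM0, ENNReal.ofReal_pow (by norm_num)]
          congr 1
          rw [ENNReal.ofReal_inv_of_pos (by norm_num)]
          norm_num
  set E : ℕ → Set (Fin N → ℝ) := fun j => ⋃ i, S (j + i) with hEdef
  have hE_meas : ∀ j, MeasurableSet (E j) := fun j => MeasurableSet.iUnion fun i => hS_meas _
  have hE_sub : ∀ j, E j ⊆ Ω := fun j => iUnion_subset fun i => inter_subset_left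
  have hE_nested : ∀ j, E (j + 1) ⊆ E j := by
    intro j x hx
    obtain ⟨i, hi⟩ := mem_iUnion.1 hx
    exact mem_iUnion.2 ⟨1 + i, by rwa [← add_assoc]⟩
  have hS_subE : ∀ j k, j ≤ k → S k ⊆ E j := by
    intro j k hjk
    obtain ⟨i, rfl⟩ := Nat.exists_eq_add_of_le hjk
    exact subset_iUnion (fun i => S (j + i)) i
  have hE_vol : ∀ j, volume (E j) ≤ (ENNReal.ofReal M * 2) * (2⁻¹ : ℝ≥0∞) ^ j := by
    intro j
    calc volume (E j) ≤ ∑' i, volume (S (j + i)) := measure_iUnion_le _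
      _ ≤ ∑' i, ENNReal.ofReal M * (2⁻¹ : ℝ≥0∞) ^ (j + i) :=
          ENNReal.tsum_le_tsum fun i => hS_vol (j + i)
      _ = (ENNReal.ofReal M * (2⁻¹ : ℝ≥0∞) ^ j) * ∑' i, (2⁻¹ : ℝ≥0∞) ^ i := by
          rw [← ENNReal.tsum_mul_left]
          congr 1
          funext i
          rw [pow_add]
          ring
      _ = (ENNReal.ofReal M * 2) * (2⁻¹ : ℝ≥0∞) ^ j := by
          rw [ENNReal.tsum_geometric, ENNReal.one_sub_inv_two, inv_inv]
          ring
      _ = _ := rfl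
  
  have hE_tendsto : Tendsto (fun j => volume (E j)) atTop (𝓝 0) := by
    have hb : Tendsto (fun j => (ENNReal.ofReal M * 2) * (2⁻¹ : ℝ≥0∞) ^ j) atTop (𝓝 0) := by
      have h1 : Tendsto (fun j => ((2:ℝ≥0∞)⁻¹) ^ j) atTop (𝓝 0) :=
        ENNReal.tendsto_pow_atTop_nhds_zero_of_lt_one
          (by simp)
      have := ENNReal.Tendsto.const_mul h1
        (Or.inr (by finiteness : (ENNReal.ofReal M * 2) ≠ ⊤))
      simpa using this
    exact tendsto_of_tendsto_of_tendsto_of_le_of_le tendsto_const_nhds hb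
      (fun j => zero_le) hE_vol
  -- the uniform integrability estimate off the biting sets
  have hUI : ∀ j m k, j ≤ k → m ≤ 2 ^ k →
      ∫ x in Ω \ E j, exc m (wm k x) ≤ A (φ k) m - d (2 ^ k) + (1/2 : ℝ) ^ k := by
    intro j m k hjk hmk
    have hFm : MeasurableSet (Ω \ E j) := hΩm.diff (hE_meas j)
    have hzero : ∀ x ∈ Ω \ E j, exc (2 ^ k) (wm k x) = 0 := by
      intro x hx
      have hxS : x ∉ S k := fun hS => hx.2 (hS_subE j k hjk hS)
      have : ¬ ((2:ℝ) ^ k < |wm k x|) := fun hlt => hxS ⟨hx.1, hlt⟩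
      refine exc_eq_zero ?_
      push_cast
      linarith [not_lt.1 this]
    have heq : ∫ x in Ω \ E j, exc m (wm k x)
        = ∫ x in Ω \ E j, (exc m (wm k x) - exc (2 ^ k) (wm k x)) := by
      refine setIntegral_congr_fun hFm fun x hx => ?_
      rw [hzero x hx, sub_zero]
    have hsub : Ω \ E j ⊆ Ω := diff_subset
    have hint2 : IntegrableOn (fun x => exc m (wm k x) - exc (2 ^ k) (wm k x)) Ω volume :=
      (hexc_int (φ k) m).sub (hexc_int (φ k) (2 ^ k))
    have hle2 : ∫ x in Ω \ E j, (exc m (wm k x) - exc (2 ^ k) (wm k x))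
        ≤ ∫ x in Ω, (exc m (wm k x) - exc (2 ^ k) (wm k x)) := by
      refine setIntegral_mono_set hint2 ?_ (HasSubset.Subset.eventuallyLE hsub)
      refine Eventually.of_forall fun x => ?_
      have := exc_anti hmk (wm k x)
      simp only [Pi.zero_apply]
      linarith
    have heq2 : ∫ x in Ω, (exc m (wm k x) - exc (2 ^ k) (wm k x))
        = A (φ k) m - A (φ k) (2 ^ k) :=
      integral_sub (hexc_int (φ k) m) (hexc_int (φ k) (2 ^ k))
    have := hbite' k
    rw [heq]
    rw [heq2] at hle2
    linarith
  -- the L¹ elements associated to the weak limits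
  haveI : Fact ((1:ℝ≥0∞) ≤ 2) := ⟨by norm_num⟩
  have hg2_mem1 : ∀ m, MemLp (fun x => (g2 m : (Fin N → ℝ) → ℝ) x) 1 μ := fun m =>
    (Lp.memLp (g2 m)).mono_exponent (by norm_num)
  set g1s : ℕ → Lp ℝ 1 μ := fun m => (hg2_mem1 m).toLp _ with hg1sdef
  have hg1s_coe : ∀ m, (g1s m : (Fin N → ℝ) → ℝ) =ᵐ[μ] (g2 m : (Fin N → ℝ) → ℝ) :=
    fun m => (hg2_mem1 m).coeFn_toLp
  -- the key Cauchy estimate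
  have hCau : ∀ m m', m ≤ m' → ‖g1s m' - g1s m‖ ≤ d m - dl := by
    intro m m' hmm
    set Dfun : (Fin N → ℝ) → ℝ :=
      fun x => (g2 m' : (Fin N → ℝ) → ℝ) x - (g2 m : (Fin N → ℝ) → ℝ) x with hDdef
    have hDasm : AEStronglyMeasurable Dfun μ :=
      (Lp.aestronglyMeasurable (g2 m')).sub (Lp.aestronglyMeasurable (g2 m))
    set Dmk : (Fin N → ℝ) → ℝ := hDasm.mk _ with hDmkdef
    have hDmk_meas : Measurable Dmk := hDasm.stronglyMeasurable_mk.measurable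
    have hDmk_ae : Dfun =ᵐ[μ] Dmk := hDasm.ae_eq_mk
    set ψ : (Fin N → ℝ) → ℝ := fun x => if 0 ≤ Dmk x then 1 else -1 with hψdef
    have hψ_meas : Measurable ψ :=
      Measurable.ite (measurableSet_le measurable_const hDmk_meas)
        measurable_const measurable_const
    have hψ_bd : ∀ x, ‖ψ x‖ ≤ 1 := by
      intro x
      by_cases hx : 0 ≤ Dmk x <;> simp [hψdef, hx]
    have hψ_mem : MemLp ψ 2 μ :=
      MemLp.of_bound hψ_meas.aestronglyMeasurable 1 (Eventually.of_forall hψ_bd)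
    set Ψ : Lp ℝ 2 μ := hψ_mem.toLp _ with hΨdef
    have hΨcoe : (Ψ : (Fin N → ℝ) → ℝ) =ᵐ[μ] ψ := hψ_mem.coeFn_toLp
    have hinner : ∀ n mm, ⟪V n mm, Ψ⟫ = ∫ x, ψ x * trc mm (fm n x) ∂μ := by
      intro n mm
      rw [MeasureTheory.L2.inner_def]
      refine integral_congr_ae ?_
      filter_upwards [hV_coe n mm, hΨcoe] with x h1 h2
      rw [h1, h2, RCLike.inner_apply, conj_trivial, mul_comm]
    have hinner_g : ∀ mm, ⟪g2 mm, Ψ⟫ = ∫ x, ψ x * (g2 mm : (Fin N → ℝ) → ℝ) x ∂μ := by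
      intro mm
      rw [MeasureTheory.L2.inner_def]
      refine integral_congr_ae ?_
      filter_upwards [hΨcoe] with x h2
      rw [h2, RCLike.inner_apply, conj_trivial, mul_comm]
    have htrc_int : ∀ n mm, Integrable (fun x => ψ x * trc mm (fm n x)) μ := by
      intro n mm
      exact Integrable.bdd_mul ((hV n mm).integrable (by norm_num))
        hψ_meas.aestronglyMeasurable (Eventually.of_forall hψ_bd)
    have hdiff : ∀ k, |⟪V (φ₁ k) m', Ψ⟫ - ⟪V (φ₁ k) m, Ψ⟫|
        ≤ A (φ₁ k) m - A (φ₁ k) m' := by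
      intro k
      rw [hinner, hinner, ← integral_sub (htrc_int _ m') (htrc_int _ m)]
      have hptw : ∀ x, |ψ x * trc m' (fm (φ₁ k) x) - ψ x * trc m (fm (φ₁ k) x)|
          ≤ exc m (fm (φ₁ k) x) - exc m' (fm (φ₁ k) x) := by
        intro x
        rw [← mul_sub, abs_mul]
        have h1 := hψ_bd x
        rw [Real.norm_eq_abs] at h1
        have h2 := abs_trc_sub_trc hmm (fm (φ₁ k) x)
        have h3 : (0:ℝ) ≤ |trc m' (fm (φ₁ k) x) - trc m (fm (φ₁ k) x)| := abs_nonneg _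
        nlinarith [abs_nonneg (ψ x)]
      calc |∫ x, (ψ x * trc m' (fm (φ₁ k) x) - ψ x * trc m (fm (φ₁ k) x)) ∂μ|
          ≤ ∫ x, |ψ x * trc m' (fm (φ₁ k) x) - ψ x * trc m (fm (φ₁ k) x)| ∂μ := by
            simpa [Real.norm_eq_abs] using
              norm_integral_le_integral_norm
                (fun x => ψ x * trc m' (fm (φ₁ k) x) - ψ x * trc m (fm (φ₁ k) x)) (μ := μ)
        _ ≤ ∫ x, (exc m (fm (φ₁ k) x) - exc m' (fm (φ₁ k) x)) ∂μ := by
            refine integral_mono ((htrc_int _ m').sub (htrc_int _ m)).abs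
              ((hexc_int _ m).sub (hexc_int _ m')) fun x => hptw x
        _ = A (φ₁ k) m - A (φ₁ k) m' := integral_sub (hexc_int _ m) (hexc_int _ m')
    have hlim : Tendsto (fun k => ⟪V (φ₁ k) m', Ψ⟫ - ⟪V (φ₁ k) m, Ψ⟫) atTop
        (𝓝 (⟪g2 m', Ψ⟫ - ⟪g2 m, Ψ⟫)) := (hg2 m' Ψ).sub (hg2 m Ψ)
    have hlimA : Tendsto (fun k => A (φ₁ k) m - A (φ₁ k) m') atTop (𝓝 (d m - d m')) :=
      (hAd m).sub (hAd m')
    have hbound : |⟪g2 m', Ψ⟫ - ⟪g2 m, Ψ⟫| ≤ d m - d m' :=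
      le_of_tendsto_of_tendsto' hlim.abs hlimA hdiff
    have hg2_int : ∀ mm, Integrable ((g2 mm : (Fin N → ℝ) → ℝ)) μ := fun mm =>
      (Lp.memLp (g2 mm)).integrable (by norm_num)
    have hψg_int : ∀ mm, Integrable (fun x => ψ x * (g2 mm : (Fin N → ℝ) → ℝ) x) μ :=
      fun mm => Integrable.bdd_mul (hg2_int mm) hψ_meas.aestronglyMeasurable (Eventually.of_forall hψ_bd)
    have hid : ∫ x, |Dfun x| ∂μ = ⟪g2 m', Ψ⟫ - ⟪g2 m, Ψ⟫ := by
      rw [hinner_g, hinner_g, ← integral_sub (hψg_int m') (hψg_int m)]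
      refine integral_congr_ae ?_
      filter_upwards [hDmk_ae] with x hx
      have : ψ x * (g2 m' : (Fin N → ℝ) → ℝ) x - ψ x * (g2 m : (Fin N → ℝ) → ℝ) x
          = ψ x * Dfun x := by rw [hDdef]; ring
      rw [this, hψdef]
      by_cases h0 : 0 ≤ Dmk x
      · simp only [if_pos h0, one_mul]
        rw [abs_of_nonneg (hx ▸ h0)]
      · simp only [if_neg h0, neg_one_mul]
        push_neg at h0
        rw [abs_of_neg (hx ▸ h0)]
    have hnorm : ‖g1s m' - g1s m‖ = ∫ x, |Dfun x| ∂μ := by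
      rw [L1.norm_eq_integral_norm]
      refine integral_congr_ae ?_
      filter_upwards [Lp.coeFn_sub (g1s m') (g1s m), hg1s_coe m', hg1s_coe m]
        with x h1 h2 h3
      rw [h1]
      simp only [Pi.sub_apply, Real.norm_eq_abs, h2, h3, hDdef]
    rw [hnorm, hid]
    have := abs_le.1 hbound
    have := hdl_le m'
    linarith
  -- the limit function g
  have hCauchy : CauchySeq g1s := by
    refine cauchySeq_of_le_tendsto_0 (fun n => d n - dl) (fun n m' K hn hm' => ?_) ?_
    · rcases le_total n m' with hcase | hcase
      · rw [dist_eq_norm, norm_sub_rev]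
        refine le_trans (hCau n m' hcase) ?_
        show d n - dl ≤ d K - dl
        have := hd_anti hn
        linarith
      · rw [dist_eq_norm]
        refine le_trans (hCau m' n hcase) ?_
        show d m' - dl ≤ d K - dl
        have := hd_anti hm'
        linarith
    · have := hdl.sub (tendsto_const_nhds (x := dl))
      simpa using this
  obtain ⟨gL, hgL⟩ := cauchySeq_tendsto_of_complete hCauchy
  set gLf : (Fin N → ℝ) → ℝ := fun x => (gL : (Fin N → ℝ) → ℝ) x with hgLfdef
  have hgL_int : Integrable gLf μ := L1.integrable_coeFn gL
  refine ⟨gLf, hgL_int, φ, hφ, E, (fun j => ⟨hE_meas j, hE_sub j⟩), hE_nested,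
    hE_tendsto, ?_⟩
  intro j h hmeas hhbd
  obtain ⟨Mh, hMh⟩ := hhbd
  set F : Set (Fin N → ℝ) := Ω \ E j with hFdef
  have hF_meas : MeasurableSet F := hΩm.diff (hE_meas j)
  have hF_sub : F ⊆ Ω := diff_subset
  set Mh' : ℝ := max Mh 0 with hMh'def
  have hMh'0 : 0 ≤ Mh' := le_max_right _ _
  set H : (Fin N → ℝ) → ℝ := F.indicator h with hHdef
  have hH_meas : Measurable H := hmeas.indicator hF_meas
  have hH_bd : ∀ x, ‖H x‖ ≤ Mh' := by
    intro x
    rw [Real.norm_eq_abs]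
    by_cases hx : x ∈ F
    · rw [hHdef, indicator_of_mem hx]
      exact le_trans (hMh x hx) (le_max_left _ _)
    · rw [hHdef, indicator_of_notMem hx]
      simpa using hMh'0
  have hH_mem : MemLp H 2 μ :=
    MemLp.of_bound hH_meas.aestronglyMeasurable Mh' (Eventually.of_forall hH_bd)
  set Ψ : Lp ℝ 2 μ := hH_mem.toLp _ with hΨdef
  have hΨcoe : (Ψ : (Fin N → ℝ) → ℝ) =ᵐ[μ] H := hH_mem.coeFn_toLp
  have hrestrict : μ.restrict F = volume.restrict F := by
    rw [hμdef, Measure.restrict_restrict hF_meas, inter_eq_self_of_subset_left hF_sub]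
  have key : ∀ u : (Fin N → ℝ) → ℝ,
      (∫ x in F, u x * h x) = ∫ x, H x * u x ∂μ := by
    intro u
    have : (∫ x in F, u x * h x) = ∫ x in F, u x * h x ∂μ := by rw [hrestrict]
    rw [this, ← integral_indicator hF_meas]
    refine integral_congr_ae (Eventually.of_forall fun x => ?_)
    by_cases hx : x ∈ F <;>
      simp [hHdef, Set.indicator_apply, hx, mul_comm]
  have heqk : ∀ k, (∫ x in F, f (φ k) x * h x) = ∫ x, H x * wm k x ∂μ := by
    intro k
    rw [key (f (φ k))]
    refine integral_congr_ae ?_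
    filter_upwards [hfm_ae (φ k)] with x hx
    rw [hx]
  have hkeyg : (∫ x in F, gLf x * h x) = ∫ x, H x * gLf x ∂μ := key gLf
  -- integrability of all the products
  have hH_wm_int : ∀ k, Integrable (fun x => H x * wm k x) μ := fun k =>
    Integrable.bdd_mul (hfm_int (φ k)) hH_meas.aestronglyMeasurable (Eventually.of_forall hH_bd)
  have hH_trc_int : ∀ k m, Integrable (fun x => H x * trc m (wm k x)) μ := fun k m =>
    Integrable.bdd_mul ((hV (φ k) m).integrable (by norm_num))
      hH_meas.aestronglyMeasurable (Eventually.of_forall hH_bd)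
  have hg2_int : ∀ m, Integrable ((g2 m : (Fin N → ℝ) → ℝ)) μ := fun m =>
    (Lp.memLp (g2 m)).integrable (by norm_num)
  have hH_g2_int : ∀ m, Integrable (fun x => H x * (g2 m : (Fin N → ℝ) → ℝ) x) μ :=
    fun m => Integrable.bdd_mul (hg2_int m) hH_meas.aestronglyMeasurable (Eventually.of_forall hH_bd)
  have hH_gL_int : Integrable (fun x => H x * gLf x) μ :=
    Integrable.bdd_mul hgL_int hH_meas.aestronglyMeasurable (Eventually.of_forall hH_bd)
  -- identification of inner products
  have I2 : ∀ k m, ⟪V (φ k) m, Ψ⟫ = ∫ x, H x * trc m (wm k x) ∂μ := by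
    intro k m
    rw [MeasureTheory.L2.inner_def]
    refine integral_congr_ae ?_
    filter_upwards [hV_coe (φ k) m, hΨcoe] with x h1 h2
    rw [h1, h2, RCLike.inner_apply, conj_trivial, mul_comm]
  have I2' : ∀ m, ⟪g2 m, Ψ⟫ = ∫ x, H x * (g2 m : (Fin N → ℝ) → ℝ) x ∂μ := by
    intro m
    rw [MeasureTheory.L2.inner_def]
    refine integral_congr_ae ?_
    filter_upwards [hΨcoe] with x h2
    rw [h2, RCLike.inner_apply, conj_trivial, mul_comm]
  -- term 3 bound
  have E3 : ∀ m, |(∫ x, H x * (g2 m : (Fin N → ℝ) → ℝ) x ∂μ) - ∫ x, H x * gLf x ∂μ|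
      ≤ Mh' * ‖g1s m - gL‖ := by
    intro m
    rw [← integral_sub (hH_g2_int m) hH_gL_int]
    have hnorm1 : ‖g1s m - gL‖ = ∫ x, ‖(↑↑(g1s m - gL) : (Fin N → ℝ) → ℝ) x‖ ∂μ :=
      L1.norm_eq_integral_norm _
    rw [hnorm1, ← integral_const_mul]
    have hInd : Integrable (fun x => Mh' * ‖(↑↑(g1s m - gL) : (Fin N → ℝ) → ℝ) x‖) μ :=
      (L1.integrable_coeFn (g1s m - gL)).norm.const_mul Mh'
    refine le_trans (by
      simpa [Real.norm_eq_abs] using norm_integral_le_integral_norm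
        (fun x => H x * (g2 m : (Fin N → ℝ) → ℝ) x - H x * gLf x) (μ := μ)) ?_
    refine integral_mono_ae ((hH_g2_int m).sub hH_gL_int).abs hInd ?_
    filter_upwards [Lp.coeFn_sub (g1s m) gL, hg1s_coe m] with x h1 h2
    rw [h1]
    simp only [Pi.sub_apply, Real.norm_eq_abs, h2]
    rw [← mul_sub, abs_mul]
    refine mul_le_mul_of_nonneg_right ?_ (abs_nonneg _)
    rw [← Real.norm_eq_abs]
    exact hH_bd x
  -- term 1 bound
  have E1 : ∀ m k, j ≤ k → m ≤ k →
      |(∫ x, H x * wm k x ∂μ) - ∫ x, H x * trc m (wm k x) ∂μ|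
        ≤ Mh' * (A (φ k) m - dl + (1/2:ℝ) ^ k) := by
    intro m k hjk hmk
    have hm2k : m ≤ 2 ^ k :=
      le_trans (Nat.lt_two_pow_self (n := m)).le (Nat.pow_le_pow_right (by norm_num) hmk)
    have hUIk := hUI j m k hjk hm2k
    have hdlk := hdl_le (2 ^ k)
    have hFint : (∫ x in F, exc m (wm k x)) = ∫ x, F.indicator (fun x => exc m (wm k x)) x ∂μ := by
      rw [integral_indicator hF_meas, hrestrict]
    have hIndInt : Integrable (fun x => Mh' * F.indicator (fun x => exc m (wm k x)) x) μ := by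
      refine (Integrable.indicator ?_ hF_meas).const_mul Mh'
      exact hexc_int (φ k) m
    rw [← integral_sub (hH_wm_int k) (hH_trc_int k m)]
    have hptw : ∀ x, |H x * wm k x - H x * trc m (wm k x)|
        ≤ Mh' * F.indicator (fun x => exc m (wm k x)) x := by
      intro x
      rw [← mul_sub, abs_mul]
      by_cases hx : x ∈ F
      · rw [indicator_of_mem hx, abs_sub_trc]
        refine mul_le_mul_of_nonneg_right ?_ (exc_nonneg _ _)
        rw [← Real.norm_eq_abs]; exact hH_bd x
      · rw [hHdef, indicator_of_notMem hx, indicator_of_notMem hx,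
          abs_zero, zero_mul, mul_zero]
    calc |∫ x, (H x * wm k x - H x * trc m (wm k x)) ∂μ|
        ≤ ∫ x, |H x * wm k x - H x * trc m (wm k x)| ∂μ := by
          simpa [Real.norm_eq_abs] using norm_integral_le_integral_norm
            (fun x => H x * wm k x - H x * trc m (wm k x)) (μ := μ)
      _ ≤ ∫ x, Mh' * F.indicator (fun x => exc m (wm k x)) x ∂μ :=
          integral_mono ((hH_wm_int k).sub (hH_trc_int k m)).abs hIndInt hptw
      _ = Mh' * ∫ x in F, exc m (wm k x) := by rw [integral_const_mul, hFint]
      _ ≤ Mh' * (A (φ k) m - dl + (1/2:ℝ) ^ k) := by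
          refine mul_le_mul_of_nonneg_left ?_ hMh'0
          linarith
  -- now the ε-argument
  rw [Metric.tendsto_atTop]
  intro ε hε
  -- choose the truncation level m
  have t1 : Tendsto (fun m => (Mh' + 1) * (d m - dl)) atTop (𝓝 0) := by
    have := (hdl.sub (tendsto_const_nhds (x := dl))).const_mul (Mh' + 1)
    simpa using this
  have t2 : Tendsto (fun m => Mh' * ‖g1s m - gL‖) atTop (𝓝 0) := by
    have hnorm0 : Tendsto (fun m => ‖g1s m - gL‖) atTop (𝓝 0) := by
      rw [← tendsto_iff_norm_sub_tendsto_zero]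
      exact hgL
    have := hnorm0.const_mul Mh'
    simpa using this
  obtain ⟨m, hm1, hm2⟩ := ((t1.eventually (eventually_lt_nhds (show (0:ℝ) < ε/6 by positivity))).and
    (t2.eventually (eventually_lt_nhds (show (0:ℝ) < ε/6 by positivity)))).exists
  -- eventual bound for term 1
  have hd_dl_nonneg : 0 ≤ d m - dl := by linarith [hdl_le m]
  have hlim1 : Tendsto (fun k => Mh' * (A (φ k) m - dl + (1/2:ℝ) ^ k)) atTop
      (𝓝 (Mh' * (d m - dl))) := by
    have hpow : Tendsto (fun k => ((1:ℝ)/2) ^ k) atTop (𝓝 0) := by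
      refine tendsto_pow_atTop_nhds_zero_of_lt_one (by norm_num) (by norm_num)
    have := (((hAd' m).sub (tendsto_const_nhds (x := dl))).add hpow).const_mul Mh'
    simpa using this
  have hlt1 : Mh' * (d m - dl) < ε/6 := by nlinarith
  have ev1 : ∀ᶠ k in atTop, Mh' * (A (φ k) m - dl + (1/2:ℝ) ^ k) < ε/6 :=
    hlim1.eventually (eventually_lt_nhds hlt1)
  have ev2 : ∀ᶠ k in atTop, |⟪V (φ k) m, Ψ⟫ - ⟪g2 m, Ψ⟫| < ε/6 := by
    have := Metric.tendsto_atTop.1 (hg2' m Ψ) (ε/6) (by positivity)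
    obtain ⟨K, hK⟩ := this
    refine eventually_atTop.2 ⟨K, fun k hk => ?_⟩
    have := hK k hk
    rwa [Real.dist_eq] at this
  obtain ⟨K₁, hK₁⟩ := eventually_atTop.1 ev1
  obtain ⟨K₂, hK₂⟩ := eventually_atTop.1 ev2
  refine ⟨max (max j m) (max K₁ K₂), fun k hk => ?_⟩
  have hkj : j ≤ k := le_trans (le_trans (le_max_left _ _) (le_max_left _ _)) hk
  have hkm : m ≤ k := le_trans (le_trans (le_max_right _ _) (le_max_left _ _)) hk
  have hkK₁ : K₁ ≤ k := le_trans (le_trans (le_max_left _ _) (le_max_right _ _)) hk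
  have hkK₂ : K₂ ≤ k := le_trans (le_trans (le_max_right _ _) (le_max_right _ _)) hk
  rw [Real.dist_eq, heqk k, hkeyg]
  have b1 := le_trans (E1 m k hkj hkm) (le_of_lt (hK₁ k hkK₁))
  have b2 := hK₂ k hkK₂
  have b3 := lt_of_le_of_lt (E3 m) hm2
  rw [I2 k m, I2' m] at b2
  set X := ∫ x, H x * wm k x ∂μ with hX
  set Y := ∫ x, H x * trc m (wm k x) ∂μ with hY
  set Z := ∫ x, H x * (g2 m : (Fin N → ℝ) → ℝ) x ∂μ with hZ
  set W := ∫ x, H x * gLf x ∂μ with hW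
  have htri : |X - W| ≤ |X - Y| + |Y - Z| + |Z - W| := by
    calc |X - W| ≤ |X - Z| + |Z - W| := abs_sub_le _ _ _
      _ ≤ (|X - Y| + |Y - Z|) + |Z - W| := by
          have := abs_sub_le X Y Z
          linarith
  have hfin : |X - W| < ε/6 + ε/6 + ε/6 := by
    refine lt_of_le_of_lt htri ?_
    have h1 : |X - Y| ≤ ε/6 := b1
    have h2 : |Y - Z| < ε/6 := b2
    have h3 : |Z - W| < ε/6 := b3
    linarith
  linarith
end

section
/- Let (X, 𝔪) be a finite measure space, let q ∈ [1, ∞), and let (u_n)_n be a sequence of measurable real-valued functions on X. Assume: (i) for every θ > 0 there exists k > 0 such that 𝔪({x : |u_n(x)| > k}) ≤ θ for all n; and (ii) for every k > 0 the sequence of truncations (T_k ∘ u_n)_n is a Cauchy sequence in L^q(𝔪). Then (u_n)_n is Cauchy in measure: for all s > 0 and θ > 0 there exists n₀ such that 𝔪({x : |u_n(x) − u_m(x)| > s}) ≤ θ for all n, m ≥ n₀. -/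
open MeasureTheory

/-- If a sequence of measurable functions has uniformly small tails and all its
truncations are Cauchy in `L^q`, then the sequence is Cauchy in measure. -/
theorem cauchy_in_measure_of_truncations
    {X : Type*} [MeasurableSpace X] (μ : Measure X) [IsFiniteMeasure μ]
    (q : ℝ) (hq : 1 ≤ q)
    (u : ℕ → X → ℝ) (hmeas : ∀ n, Measurable (u n))
    (htail : ∀ θ : ℝ, 0 < θ → ∃ k : ℝ, 0 < k ∧
      ∀ n, μ {x | k < |u n x|} ≤ ENNReal.ofReal θ)
    (htrunc : ∀ k : ℝ, 0 < k → ∀ ε : ℝ, 0 < ε → ∃ n₀ : ℕ, ∀ n ≥ n₀, ∀ m ≥ n₀,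
      eLpNorm (fun x => max (-k) (min k (u n x)) - max (-k) (min k (u m x)))
        (ENNReal.ofReal q) μ ≤ ENNReal.ofReal ε) :
    ∀ s : ℝ, 0 < s → ∀ θ : ℝ, 0 < θ → ∃ n₀ : ℕ, ∀ n ≥ n₀, ∀ m ≥ n₀,
      μ {x | s < |u n x - u m x|} ≤ ENNReal.ofReal θ := by
  intro s hs θ hθ
  have hq0 : 0 < q := lt_of_lt_of_le one_pos hq
  obtain ⟨k, hk, hktail⟩ := htail (θ / 3) (by positivity)
  set ε : ℝ := s * (θ / 3) ^ (1 / q) with hε_def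
  have hε : 0 < ε := by positivity
  obtain ⟨n₀, hn₀⟩ := htrunc k hk ε hε
  refine ⟨n₀, fun n hn m hm => ?_⟩
  set f : X → ℝ := fun x =>
    max (-k) (min k (u n x)) - max (-k) (min k (u m x)) with hf
  have hfmeas : Measurable f := by
    simp only [hf]
    fun_prop
  -- Set inclusion
  have hsub : {x | s < |u n x - u m x|} ⊆
      ({x | k < |u n x|} ∪ {x | k < |u m x|}) ∪ {x | ENNReal.ofReal s ≤ ‖f x‖₊} := by
    intro x hx
    by_cases h1 : k < |u n x|
    · exact Or.inl (Or.inl h1)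
    by_cases h2 : k < |u m x|
    · exact Or.inl (Or.inr h2)
    push_neg at h1 h2
    right
    have h1' := abs_le.mp h1
    have h2' := abs_le.mp h2
    have hTn : max (-k) (min k (u n x)) = u n x := by
      rw [min_eq_right h1'.2, max_eq_right h1'.1]
    have hTm : max (-k) (min k (u m x)) = u m x := by
      rw [min_eq_right h2'.2, max_eq_right h2'.1]
    have hfx : f x = u n x - u m x := by simp [hf, hTn, hTm]
    have : ENNReal.ofReal s ≤ ENNReal.ofReal |f x| := by
      apply ENNReal.ofReal_le_ofReal
      rw [hfx]; exact le_of_lt hx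
    simpa [Real.enorm_eq_ofReal_abs] using this
  have hp_ne_zero : (ENNReal.ofReal q) ≠ 0 := by
    simp [ENNReal.ofReal_eq_zero, not_le, hq0]
  have hp_ne_top : (ENNReal.ofReal q) ≠ ⊤ := ENNReal.ofReal_ne_top
  have hptoReal : (ENNReal.ofReal q).toReal = q := ENNReal.toReal_ofReal hq0.le
  have hs_ne : ENNReal.ofReal s ≠ 0 := by
    simp [ENNReal.ofReal_eq_zero, not_le, hs]
  have hcheb := meas_ge_le_mul_pow_eLpNorm_enorm μ hp_ne_zero hp_ne_top
    hfmeas.aestronglyMeasurable hs_ne (by simp)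
  have hsnorm := hn₀ n hn m hm
  -- bound the Chebyshev term
  have hkey : μ {x | ENNReal.ofReal s ≤ ‖f x‖₊} ≤ ENNReal.ofReal (θ / 3) := by
    refine hcheb.trans ?_
    rw [hptoReal]
    have h1 : eLpNorm f (ENNReal.ofReal q) μ ^ q ≤ (ENNReal.ofReal ε) ^ q :=
      ENNReal.rpow_le_rpow hsnorm hq0.le
    calc (ENNReal.ofReal s)⁻¹ ^ q * eLpNorm f (ENNReal.ofReal q) μ ^ q
        ≤ (ENNReal.ofReal s)⁻¹ ^ q * (ENNReal.ofReal ε) ^ q :=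
          mul_le_mul_right h1 _
      _ = ENNReal.ofReal (θ / 3) := by
          rw [hε_def, ENNReal.ofReal_mul hs.le,
            ENNReal.mul_rpow_of_nonneg _ _ hq0.le, ← mul_assoc,
            ENNReal.inv_rpow,
            ENNReal.inv_mul_cancel
              (by simp [ENNReal.rpow_eq_zero_iff, hs_ne, ENNReal.ofReal_ne_top])
              (ENNReal.rpow_ne_top_of_nonneg hq0.le ENNReal.ofReal_ne_top),
            one_mul,
            ENNReal.ofReal_rpow_of_nonneg (by positivity) hq0.le]
          congr 1
          rw [← Real.rpow_mul (by positivity), one_div,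
            inv_mul_cancel₀ hq0.ne', Real.rpow_one]
  calc μ {x | s < |u n x - u m x|}
      ≤ μ (({x | k < |u n x|} ∪ {x | k < |u m x|}) ∪
          {x | ENNReal.ofReal s ≤ ‖f x‖₊}) := measure_mono hsub
    _ ≤ μ ({x | k < |u n x|} ∪ {x | k < |u m x|}) +
          μ {x | ENNReal.ofReal s ≤ ‖f x‖₊} := measure_union_le _ _
    _ ≤ (μ {x | k < |u n x|} + μ {x | k < |u m x|}) +
          μ {x | ENNReal.ofReal s ≤ ‖f x‖₊} :=
        add_le_add_left (measure_union_le _ _) _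
    _ ≤ (ENNReal.ofReal (θ / 3) + ENNReal.ofReal (θ / 3)) +
          ENNReal.ofReal (θ / 3) :=
        add_le_add (add_le_add (hktail n) (hktail m)) hkey
    _ = ENNReal.ofReal θ := by
        rw [← ENNReal.ofReal_add (by positivity) (by positivity),
          ← ENNReal.ofReal_add (by positivity) (by positivity)]
        ring_nf
end

section
/- (Minty's theorem in ℝ.) Let β ⊆ ℝ × ℝ be a nonempty maximal monotone graph. Then for every ε > 0 and every s ∈ ℝ there exists exactly one pair (r, w) ∈ β such that r + ε·w = s. In particular, the resolvent J_ε = (I + εβ)^{-1} is a well-defined single-valued function from ℝ to ℝ. -/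
/-- `β ⊆ ℝ × ℝ` is a monotone graph. -/
def IsMonotoneGraph (β : Set (ℝ × ℝ)) : Prop :=
  ∀ p ∈ β, ∀ q ∈ β, 0 ≤ (p.1 - q.1) * (p.2 - q.2)

/-- `β ⊆ ℝ × ℝ` is a maximal monotone graph. -/
def IsMaximalMonotoneGraph (β : Set (ℝ × ℝ)) : Prop :=
  IsMonotoneGraph β ∧ ∀ β' : Set (ℝ × ℝ), β ⊆ β' → IsMonotoneGraph β' → β' = β

/-- Any point compatible with a maximal monotone graph belongs to it. -/
lemma mem_of_compat (β : Set (ℝ × ℝ)) (hβ : IsMaximalMonotoneGraph β)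
    (a b : ℝ) (h : ∀ p ∈ β, 0 ≤ (p.1 - a) * (p.2 - b)) : (a, b) ∈ β := by
  have h' : IsMonotoneGraph (insert (a, b) β) := by
    rintro p (rfl | hp) q (rfl | hq)
    · simp
    · have := h q hq; nlinarith
    · have := h p hp; nlinarith
    · exact hβ.1 p hp q hq
  have := hβ.2 _ (Set.subset_insert _ _) h'
  rw [← this]; exact Set.mem_insert _ _

/-- Minty's theorem in `ℝ`: the resolvent `(I + εβ)⁻¹` of a nonempty maximal
monotone graph is everywhere defined and single valued. -/
theorem minty_resolvent (β : Set (ℝ × ℝ)) (hne : β.Nonempty)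
    (hβ : IsMaximalMonotoneGraph β) :
    ∀ ε : ℝ, 0 < ε → ∀ s : ℝ,
      ∃! rw : ℝ × ℝ, rw ∈ β ∧ rw.1 + ε * rw.2 = s := by
  intro ε hε s
  have hmono := hβ.1
  -- uniqueness
  have huniq : ∀ p : ℝ × ℝ, (p ∈ β ∧ p.1 + ε * p.2 = s) →
      ∀ q : ℝ × ℝ, (q ∈ β ∧ q.1 + ε * q.2 = s) → q = p := by
    rintro p ⟨hp, hps⟩ q ⟨hq, hqs⟩
    have hm := hmono q hq p hp
    have h2 : q.2 = p.2 := by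
      by_contra h
      have hne2 : q.2 - p.2 ≠ 0 := sub_ne_zero.mpr h
      have hpos : 0 < (q.2 - p.2) * (q.2 - p.2) := mul_self_pos.mpr hne2
      have hd : q.1 - p.1 = -(ε * (q.2 - p.2)) := by linarith
      rw [hd] at hm
      nlinarith [mul_pos hε hpos]
    rw [h2] at hqs
    have h1 : q.1 = p.1 := by linarith
    exact Prod.ext h1 h2
  -- basic monotonicity consequences
  have hk1 : ∀ p ∈ β, ∀ q ∈ β, p.1 < q.1 → p.2 ≤ q.2 := by
    intro p hp q hq h
    have := hmono p hp q hq
    nlinarith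
  have hk2 : ∀ p ∈ β, ∀ q ∈ β, p.2 < q.2 → p.1 ≤ q.1 := by
    intro p hp q hq h
    have := hmono p hp q hq
    nlinarith
  by_cases hex : ∃ p ∈ β, p.1 + ε * p.2 = s
  · obtain ⟨p, hp, hps⟩ := hex
    exact ⟨p, ⟨hp, hps⟩, huniq p ⟨hp, hps⟩⟩
  push_neg at hex
  set Bm : Set (ℝ × ℝ) := {p ∈ β | p.1 + ε * p.2 < s} with hBmdef
  set Bp : Set (ℝ × ℝ) := {p ∈ β | s < p.1 + ε * p.2} with hBpdef
  have hsplit : ∀ p ∈ β, p ∈ Bm ∨ p ∈ Bp := by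
    intro p hp
    rcases lt_trichotomy (p.1 + ε * p.2) s with h | h | h
    · exact Or.inl ⟨hp, h⟩
    · exact absurd h (hex p hp)
    · exact Or.inr ⟨hp, h⟩
  -- within Bm : p.1 + ε * p'.2 ≤ s
  have hBm : ∀ p ∈ Bm, ∀ p' ∈ Bm, p.1 + ε * p'.2 ≤ s := by
    intro p hp p' hp'
    rcases le_or_gt p'.2 p.2 with h | h
    · nlinarith [hp.2]
    · have := hk2 p hp.1 p' hp'.1 h
      nlinarith [hp'.2]
  -- within Bp : s ≤ q.1 + ε * q'.2
  have hBp : ∀ q ∈ Bp, ∀ q' ∈ Bp, s ≤ q.1 + ε * q'.2 := by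
    intro q hq q' hq'
    rcases le_or_gt q.2 q'.2 with h | h
    · nlinarith [hq.2]
    · have := hk2 q' hq'.1 q hq.1 h
      nlinarith [hq'.2]
  -- order between Bm and Bp
  have horder : ∀ p ∈ Bm, ∀ q ∈ Bp, p.1 ≤ q.1 ∧ p.2 ≤ q.2 := by
    intro p hp q hq
    constructor
    · by_contra h
      push_neg at h
      have := hk1 q hq.1 p hp.1 h
      nlinarith [hp.2, hq.2]
    · by_contra h
      push_neg at h
      have := hk2 q hq.1 p hp.1 h
      nlinarith [hp.2, hq.2]
  -- find the compatible point (a, b)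
  suffices hab : ∃ a b : ℝ, a + ε * b = s ∧ ∀ p ∈ β, 0 ≤ (p.1 - a) * (p.2 - b) by
    obtain ⟨a, b, habs, hcompat⟩ := hab
    have hmem : (a, b) ∈ β := mem_of_compat β hβ a b hcompat
    exact ⟨(a, b), ⟨hmem, habs⟩, huniq (a, b) ⟨hmem, habs⟩⟩
  by_cases hBpne : Bp.Nonempty
  · by_cases hBmne : Bm.Nonempty
    · -- both nonempty
      obtain ⟨p₀, hp₀⟩ := hBmne
      obtain ⟨q₀, hq₀⟩ := hBpne
      have hXne : (Prod.fst '' Bm).Nonempty := ⟨p₀.1, p₀, hp₀, rfl⟩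
      have hYne : (Prod.snd '' Bp).Nonempty := ⟨q₀.2, q₀, hq₀, rfl⟩
      have hXbdd : BddAbove (Prod.fst '' Bm) := by
        refine ⟨q₀.1, ?_⟩
        rintro x ⟨p, hp, rfl⟩
        exact (horder p hp q₀ hq₀).1
      have hYbdd : BddBelow (Prod.snd '' Bp) := by
        refine ⟨p₀.2, ?_⟩
        rintro y ⟨q, hq, rfl⟩
        exact (horder p₀ hp₀ q hq).2
      set A := sSup (Prod.fst '' Bm) with hA
      set B2 := sInf (Prod.snd '' Bp) with hB2
      set a := max A (s - ε * B2) with ha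
      refine ⟨a, (s - a) / ε, by field_simp; ring, ?_⟩
      have hA_le : ∀ p' ∈ Bm, A ≤ s - ε * p'.2 := by
        intro p' hp'
        refine csSup_le hXne ?_
        rintro x ⟨p, hp, rfl⟩
        have := hBm p hp p' hp'
        linarith
      have hA_ge : ∀ p ∈ Bm, p.1 ≤ A := fun p hp => le_csSup hXbdd ⟨p, hp, rfl⟩
      have hB2_le : ∀ q ∈ Bp, B2 ≤ q.2 := fun q hq => csInf_le hYbdd ⟨q, hq, rfl⟩
      have hB2_ge : ∀ p ∈ Bm, p.2 ≤ B2 := by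
        intro p hp
        refine le_csInf hYne ?_
        rintro y ⟨q, hq, rfl⟩
        exact (horder p hp q hq).2
      have hB2q : ∀ q ∈ Bp, s ≤ q.1 + ε * B2 := by
        intro q hq
        have : (s - q.1) / ε ≤ B2 := by
          refine le_csInf hYne ?_
          rintro y ⟨q', hq', rfl⟩
          rw [div_le_iff₀ hε]
          have := hBp q hq q' hq'
          nlinarith
        rw [div_le_iff₀ hε] at this
        linarith
      intro p hp
      rcases hsplit p hp with hpm | hpp
      · -- p ∈ Bm : p.1 ≤ a and p.2 ≤ b
        have h1 : p.1 ≤ a := le_trans (hA_ge p hpm) (le_max_left _ _)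
        have h2 : p.2 ≤ (s - a) / ε := by
          rw [le_div_iff₀ hε]
          have ha1 : A ≤ s - ε * p.2 := hA_le p hpm
          have ha2 : s - ε * B2 ≤ s - ε * p.2 := by nlinarith [hB2_ge p hpm]
          have : a ≤ s - ε * p.2 := max_le ha1 ha2
          nlinarith
        nlinarith
      · -- p ∈ Bp : a ≤ p.1 and b ≤ p.2
        have h1 : a ≤ p.1 := by
          refine max_le ?_ ?_
          · refine csSup_le hXne ?_
            rintro x ⟨p', hp', rfl⟩
            exact (horder p' hp' p hpp).1
          · have := hB2q p hpp; linarith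
        have h2 : (s - a) / ε ≤ p.2 := by
          rw [div_le_iff₀ hε]
          have : s - ε * p.2 ≤ a := le_trans (by nlinarith [hB2_le p hpp]) (le_max_right A (s - ε * B2))
          nlinarith
        nlinarith
    · -- Bm empty : everything is in Bp
      rw [Set.not_nonempty_iff_eq_empty] at hBmne
      obtain ⟨q₀, hq₀β⟩ := hne
      have hq₀ : q₀ ∈ Bp := by
        rcases hsplit q₀ hq₀β with h | h
        · rw [hBmne] at h; exact absurd h (Set.notMem_empty _)
        · exact h
      have hXne : (Prod.fst '' Bp).Nonempty := ⟨q₀.1, q₀, hq₀, rfl⟩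
      have hXbdd : BddBelow (Prod.fst '' Bp) := by
        refine ⟨s - ε * q₀.2, ?_⟩
        rintro x ⟨q, hq, rfl⟩
        have := hBp q hq q₀ hq₀
        linarith
      set a := sInf (Prod.fst '' Bp) with ha
      refine ⟨a, (s - a) / ε, by field_simp; ring, ?_⟩
      intro p hp
      have hpp : p ∈ Bp := by
        rcases hsplit p hp with h | h
        · rw [hBmne] at h; exact absurd h (Set.notMem_empty _)
        · exact h
      have h1 : a ≤ p.1 := csInf_le hXbdd ⟨p, hpp, rfl⟩
      have h2 : (s - a) / ε ≤ p.2 := by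
        rw [div_le_iff₀ hε]
        have : s - ε * p.2 ≤ a := by
          refine le_csInf hXne ?_
          rintro x ⟨q, hq, rfl⟩
          have := hBp q hq p hpp
          linarith
        nlinarith
      nlinarith
  · -- Bp empty : everything is in Bm
    rw [Set.not_nonempty_iff_eq_empty] at hBpne
    obtain ⟨p₀, hp₀β⟩ := hne
    have hp₀ : p₀ ∈ Bm := by
      rcases hsplit p₀ hp₀β with h | h
      · exact h
      · rw [hBpne] at h; exact absurd h (Set.notMem_empty _)
    have hXne : (Prod.fst '' Bm).Nonempty := ⟨p₀.1, p₀, hp₀, rfl⟩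
    have hXbdd : BddAbove (Prod.fst '' Bm) := by
      refine ⟨s - ε * p₀.2, ?_⟩
      rintro x ⟨p, hp, rfl⟩
      have := hBm p hp p₀ hp₀
      linarith
    set a := sSup (Prod.fst '' Bm) with ha
    refine ⟨a, (s - a) / ε, by field_simp; ring, ?_⟩
    intro p hp
    have hpm : p ∈ Bm := by
      rcases hsplit p hp with h | h
      · exact h
      · rw [hBpne] at h; exact absurd h (Set.notMem_empty _)
    have h1 : p.1 ≤ a := le_csSup hXbdd ⟨p, hpm, rfl⟩
    have h2 : p.2 ≤ (s - a) / ε := by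
      rw [le_div_iff₀ hε]
      have : a ≤ s - ε * p.2 := by
        refine csSup_le hXne ?_
        rintro x ⟨q, hq, rfl⟩
        have := hBm q hq p hpm
        linarith
      nlinarith
    nlinarith
end

section
/- Let β ⊆ ℝ × ℝ be a maximal monotone graph with (0, 0) ∈ β. Then there exists a nonnegative, convex, lower semicontinuous function j : ℝ → [0, +∞] with j(0) = 0 such that β is the graph of the subdifferential of j: for every (r, w) ∈ ℝ × ℝ, (r, w) ∈ β if and only if j(r) < +∞ and j(t) ≥ j(r) + w·(t − r) for all t ∈ ℝ. -/
open ENNReal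

namespace MMGAux
open MeasureTheory Set

variable (β : Set (ℝ × ℝ))

noncomputable def P : ℝ → ℝ≥0∞ :=
  fun x => ⨆ p ∈ β, ⨆ _ : p.1 ≤ x, ENNReal.ofReal p.2

noncomputable def N : ℝ → ℝ≥0∞ :=
  fun x => ⨆ p ∈ β, ⨆ _ : x ≤ p.1, ENNReal.ofReal (-p.2)

noncomputable def nu : Measure ℝ := volume.withDensity (P β)
noncomputable def mu : Measure ℝ := volume.withDensity (N β)

noncomputable def J : ℝ → ℝ≥0∞ :=
  fun r => nu β (Ioc 0 r) + mu β (Ico r 0)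

lemma Pmono : Monotone (P β) := by
  intro x y hxy
  refine iSup_mono fun p => iSup_mono fun hp => ?_
  exact iSup_le fun hpx => le_iSup_of_le (hpx.trans hxy) le_rfl

lemma Nanti : Antitone (N β) := by
  intro x y hxy
  refine iSup_mono fun p => iSup_mono fun hp => ?_
  exact iSup_le fun hpy => le_iSup_of_le (hxy.trans hpy) le_rfl

lemma Pmeas : Measurable (P β) := (Pmono β).measurable

lemma Nmeas : Measurable (N β) := (Nanti β).measurable

lemma P_le (hm : IsMonotoneGraph β) {r w : ℝ} (hrw : (r, w) ∈ β) {s : ℝ} (hs : s < r) :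
    P β s ≤ ENNReal.ofReal w := by
  refine iSup_le fun p => iSup_le fun hp => iSup_le fun hps => ?_
  refine ENNReal.ofReal_le_ofReal ?_
  have h := hm p hp (r, w) hrw
  simp only at h
  nlinarith

lemma P_ge {r w : ℝ} (hrw : (r, w) ∈ β) {s : ℝ} (hs : r ≤ s) :
    ENNReal.ofReal w ≤ P β s := by
  refine le_trans ?_ (le_iSup _ (r, w))
  refine le_trans ?_ (le_iSup _ hrw)
  exact le_trans le_rfl (le_iSup (fun _ : (r:ℝ) ≤ s => ENNReal.ofReal w) hs)

lemma N_le (hm : IsMonotoneGraph β) {r w : ℝ} (hrw : (r, w) ∈ β) {s : ℝ} (hs : r < s) :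
    N β s ≤ ENNReal.ofReal (-w) := by
  refine iSup_le fun p => iSup_le fun hp => iSup_le fun hps => ?_
  refine ENNReal.ofReal_le_ofReal ?_
  have h := hm p hp (r, w) hrw
  simp only at h
  nlinarith

lemma N_ge {r w : ℝ} (hrw : (r, w) ∈ β) {s : ℝ} (hs : s ≤ r) :
    ENNReal.ofReal (-w) ≤ N β s := by
  refine le_trans ?_ (le_iSup _ (r, w))
  refine le_trans ?_ (le_iSup _ hrw)
  exact le_trans le_rfl (le_iSup (fun _ : s ≤ (r:ℝ) => ENNReal.ofReal (-w)) hs)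

lemma wd_Ioc_le (f : ℝ → ℝ≥0∞) {x y : ℝ} {C : ℝ≥0∞} (h : ∀ s ∈ Ioo x y, f s ≤ C) :
    (volume.withDensity f) (Ioc x y) ≤ C * ENNReal.ofReal (y - x) := by
  rcases le_total y x with hyx | hxy
  · rw [Ioc_eq_empty (not_lt.2 hyx)]; simp
  · have h1 : (volume.withDensity f) (Ioc x y)
        ≤ (volume.withDensity f) (Ioo x y) + (volume.withDensity f) {y} := by
      refine le_trans (measure_mono ?_) (measure_union_le _ _)
      intro s hs
      rcases eq_or_lt_of_le hs.2 with h' | h'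
      · exact Or.inr (by simp [h'])
      · exact Or.inl ⟨hs.1, h'⟩
    have h2 : (volume.withDensity f) {y} = 0 :=
      (withDensity_absolutelyContinuous volume f) Real.volume_singleton
    have h3 : (volume.withDensity f) (Ioo x y) ≤ C * ENNReal.ofReal (y - x) := by
      rw [withDensity_apply _ measurableSet_Ioo]
      calc ∫⁻ s in Ioo x y, f s ≤ ∫⁻ _ in Ioo x y, C := setLIntegral_mono measurable_const h
        _ = C * volume (Ioo x y) := setLIntegral_const _ _
        _ = C * ENNReal.ofReal (y - x) := by rw [Real.volume_Ioo]
    calc (volume.withDensity f) (Ioc x y)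
        ≤ (volume.withDensity f) (Ioo x y) + (volume.withDensity f) {y} := h1
      _ = (volume.withDensity f) (Ioo x y) := by rw [h2, add_zero]
      _ ≤ _ := h3

lemma wd_Ico_le (f : ℝ → ℝ≥0∞) {x y : ℝ} {C : ℝ≥0∞} (h : ∀ s ∈ Ioo x y, f s ≤ C) :
    (volume.withDensity f) (Ico x y) ≤ C * ENNReal.ofReal (y - x) := by
  rcases le_total y x with hyx | hxy
  · rw [Ico_eq_empty (not_lt.2 hyx)]; simp
  · have h1 : (volume.withDensity f) (Ico x y)
        ≤ (volume.withDensity f) {x} + (volume.withDensity f) (Ioo x y) := by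
      refine le_trans (measure_mono ?_) (measure_union_le _ _)
      intro s hs
      rcases eq_or_lt_of_le hs.1 with h' | h'
      · exact Or.inl (by simp [h'.symm])
      · exact Or.inr ⟨h', hs.2⟩
    have h2 : (volume.withDensity f) {x} = 0 :=
      (withDensity_absolutelyContinuous volume f) Real.volume_singleton
    have h3 : (volume.withDensity f) (Ioo x y) ≤ C * ENNReal.ofReal (y - x) := by
      rw [withDensity_apply _ measurableSet_Ioo]
      calc ∫⁻ s in Ioo x y, f s ≤ ∫⁻ _ in Ioo x y, C := setLIntegral_mono measurable_const h
        _ = C * volume (Ioo x y) := setLIntegral_const _ _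
        _ = C * ENNReal.ofReal (y - x) := by rw [Real.volume_Ioo]
    calc (volume.withDensity f) (Ico x y)
        ≤ (volume.withDensity f) {x} + (volume.withDensity f) (Ioo x y) := h1
      _ = (volume.withDensity f) (Ioo x y) := by rw [h2, zero_add]
      _ ≤ _ := h3

lemma wd_Ioc_ge {f : ℝ → ℝ≥0∞} (hf : Measurable f) {x y : ℝ} {C : ℝ≥0∞}
    (h : ∀ s ∈ Ioc x y, C ≤ f s) :
    C * ENNReal.ofReal (y - x) ≤ (volume.withDensity f) (Ioc x y) := by
  rcases le_total y x with hyx | hxy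
  · rw [ENNReal.ofReal_eq_zero.2 (by linarith : y - x ≤ 0), mul_zero]; exact zero_le
  · rw [withDensity_apply _ measurableSet_Ioc]
    calc C * ENNReal.ofReal (y - x) = C * volume (Ioc x y) := by rw [Real.volume_Ioc]
      _ = ∫⁻ _ in Ioc x y, C := (setLIntegral_const _ _).symm
      _ ≤ ∫⁻ s in Ioc x y, f s := setLIntegral_mono hf h

lemma wd_Ico_ge {f : ℝ → ℝ≥0∞} (hf : Measurable f) {x y : ℝ} {C : ℝ≥0∞}
    (h : ∀ s ∈ Ico x y, C ≤ f s) :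
    C * ENNReal.ofReal (y - x) ≤ (volume.withDensity f) (Ico x y) := by
  rcases le_total y x with hyx | hxy
  · rw [ENNReal.ofReal_eq_zero.2 (by linarith : y - x ≤ 0), mul_zero]; exact zero_le
  · rw [withDensity_apply _ measurableSet_Ico]
    calc C * ENNReal.ofReal (y - x) = C * volume (Ico x y) := by rw [Real.volume_Ico]
      _ = ∫⁻ _ in Ico x y, C := (setLIntegral_const _ _).symm
      _ ≤ ∫⁻ s in Ico x y, f s := setLIntegral_mono hf h


lemma J_zero : J β 0 = 0 := by
  simp [J, Ioc_self, Ico_self]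

lemma J_of_nonneg {r : ℝ} (hr : 0 ≤ r) : J β r = nu β (Ioc 0 r) := by
  unfold J
  rw [Ico_eq_empty (not_lt.2 hr), measure_empty, add_zero]

lemma J_of_nonpos {r : ℝ} (hr : r ≤ 0) : J β r = mu β (Ico r 0) := by
  unfold J
  rw [Ioc_eq_empty (not_lt.2 hr), measure_empty, zero_add]

lemma J_add_pos {r t : ℝ} (h0r : 0 ≤ r) (hrt : r ≤ t) :
    J β t = J β r + nu β (Ioc r t) := by
  rw [J_of_nonneg β (h0r.trans hrt), J_of_nonneg β h0r,
    ← measure_union (Ioc_disjoint_Ioc_of_le le_rfl) measurableSet_Ioc,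
    Ioc_union_Ioc_eq_Ioc h0r hrt]

lemma J_add_neg {r t : ℝ} (htr : t ≤ r) (hr0 : r ≤ 0) :
    J β t = J β r + mu β (Ico t r) := by
  rw [J_of_nonpos β (htr.trans hr0), J_of_nonpos β hr0, add_comm,
    ← measure_union Ico_disjoint_Ico_same measurableSet_Ico,
    Ico_union_Ico_eq_Ico htr hr0]

lemma slope_pos {x y z : ℝ} (hx : 0 ≤ x) (hxy : x ≤ y) (hyz : y ≤ z) :
    ENNReal.ofReal (z - x) * J β y
      ≤ ENNReal.ofReal (z - y) * J β x + ENNReal.ofReal (y - x) * J β z := by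
  have hA : J β y = J β x + nu β (Ioc x y) := J_add_pos β hx hxy
  have hB : J β z = J β y + nu β (Ioc y z) := J_add_pos β (hx.trans hxy) hyz
  set A := nu β (Ioc x y) with hAdef
  set B := nu β (Ioc y z) with hBdef
  have hA' : A ≤ P β y * ENNReal.ofReal (y - x) :=
    wd_Ioc_le (P β) fun s hs => Pmono β hs.2.le
  have hB' : P β y * ENNReal.ofReal (z - y) ≤ B :=
    wd_Ioc_ge (Pmeas β) fun s hs => Pmono β hs.1.le
  have key : ENNReal.ofReal (z - y) * A ≤ ENNReal.ofReal (y - x) * B := by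
    calc ENNReal.ofReal (z - y) * A
        ≤ ENNReal.ofReal (z - y) * (P β y * ENNReal.ofReal (y - x)) := mul_le_mul_right hA' _
      _ = ENNReal.ofReal (y - x) * (P β y * ENNReal.ofReal (z - y)) := by ring
      _ ≤ ENNReal.ofReal (y - x) * B := mul_le_mul_right hB' _
  have hzx : ENNReal.ofReal (z - x) = ENNReal.ofReal (z - y) + ENNReal.ofReal (y - x) := by
    rw [← ENNReal.ofReal_add (by linarith) (by linarith)]
    ring_nf
  rw [hzx, hA, hB, hA]
  calc (ENNReal.ofReal (z - y) + ENNReal.ofReal (y - x)) * (J β x + A)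
      = (ENNReal.ofReal (z - y) * J β x
          + ENNReal.ofReal (y - x) * (J β x + A)) + ENNReal.ofReal (z - y) * A := by ring
    _ ≤ (ENNReal.ofReal (z - y) * J β x
          + ENNReal.ofReal (y - x) * (J β x + A)) + ENNReal.ofReal (y - x) * B :=
        add_le_add_right key _
    _ = ENNReal.ofReal (z - y) * J β x + ENNReal.ofReal (y - x) * (J β x + A + B) := by ring

lemma slope_neg {x y z : ℝ} (hz : z ≤ 0) (hxy : x ≤ y) (hyz : y ≤ z) :
    ENNReal.ofReal (z - x) * J β y
      ≤ ENNReal.ofReal (z - y) * J β x + ENNReal.ofReal (y - x) * J β z := by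
  have hA : J β x = J β y + mu β (Ico x y) := J_add_neg β hxy (hyz.trans hz)
  have hB : J β y = J β z + mu β (Ico y z) := J_add_neg β hyz hz
  set A := mu β (Ico x y) with hAdef
  set B := mu β (Ico y z) with hBdef
  have hB' : B ≤ N β y * ENNReal.ofReal (z - y) :=
    wd_Ico_le (N β) fun s hs => Nanti β hs.1.le
  have hA' : N β y * ENNReal.ofReal (y - x) ≤ A :=
    wd_Ico_ge (Nmeas β) fun s hs => Nanti β hs.2.le
  have key : ENNReal.ofReal (y - x) * B ≤ ENNReal.ofReal (z - y) * A := by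
    calc ENNReal.ofReal (y - x) * B
        ≤ ENNReal.ofReal (y - x) * (N β y * ENNReal.ofReal (z - y)) := mul_le_mul_right hB' _
      _ = ENNReal.ofReal (z - y) * (N β y * ENNReal.ofReal (y - x)) := by ring
      _ ≤ ENNReal.ofReal (z - y) * A := mul_le_mul_right hA' _
  have hzx : ENNReal.ofReal (z - x) = ENNReal.ofReal (z - y) + ENNReal.ofReal (y - x) := by
    rw [← ENNReal.ofReal_add (by linarith) (by linarith)]
    ring_nf
  rw [hzx, hA, hB]
  calc (ENNReal.ofReal (z - y) + ENNReal.ofReal (y - x)) * (J β z + B)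
      = (ENNReal.ofReal (z - y) * (J β z + B)
          + ENNReal.ofReal (y - x) * J β z) + ENNReal.ofReal (y - x) * B := by ring
    _ ≤ (ENNReal.ofReal (z - y) * (J β z + B)
          + ENNReal.ofReal (y - x) * J β z) + ENNReal.ofReal (z - y) * A := add_le_add_right key _
    _ = ENNReal.ofReal (z - y) * (J β z + B + A) + ENNReal.ofReal (y - x) * J β z := by ring


lemma J_slope {x y z : ℝ} (hxy : x ≤ y) (hyz : y ≤ z) :
    ENNReal.ofReal (z - x) * J β y
      ≤ ENNReal.ofReal (z - y) * J β x + ENNReal.ofReal (y - x) * J β z := by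
  rcases le_or_gt 0 x with hx | hx
  · exact slope_pos β hx hxy hyz
  rcases le_or_gt z 0 with hz | hz
  · exact slope_neg β hz hxy hyz
  rcases le_or_gt 0 y with hy | hy
  · -- x < 0 ≤ y ≤ z, z > 0
    have h1 : ENNReal.ofReal z * J β y ≤ ENNReal.ofReal y * J β z := by
      have := slope_pos β (le_refl 0) hy hyz
      rw [J_zero, mul_zero, zero_add, sub_zero, sub_zero] at this
      exact this
    have hmain : ENNReal.ofReal (z - x) * J β y ≤ ENNReal.ofReal (y - x) * J β z := by
      have hzne : ENNReal.ofReal z ≠ 0 := (ENNReal.ofReal_pos.2 hz).ne'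
      refine (ENNReal.mul_le_mul_iff_right hzne ENNReal.ofReal_ne_top).1 ?_
      calc ENNReal.ofReal z * (ENNReal.ofReal (z - x) * J β y)
          = ENNReal.ofReal (z - x) * (ENNReal.ofReal z * J β y) := by ring
        _ ≤ ENNReal.ofReal (z - x) * (ENNReal.ofReal y * J β z) := mul_le_mul_right h1 _
        _ = ENNReal.ofReal ((z - x) * y) * J β z := by
            rw [ENNReal.ofReal_mul (by linarith : (0:ℝ) ≤ z - x), mul_assoc]
        _ ≤ ENNReal.ofReal ((y - x) * z) * J β z :=
            mul_le_mul_left (ENNReal.ofReal_le_ofReal (by nlinarith)) _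
        _ = ENNReal.ofReal z * (ENNReal.ofReal (y - x) * J β z) := by
            rw [ENNReal.ofReal_mul (by linarith : (0:ℝ) ≤ y - x)]; ring
    exact hmain.trans le_add_self
  · -- x ≤ y < 0 < z
    have h1 : ENNReal.ofReal (-x) * J β y ≤ ENNReal.ofReal (-y) * J β x := by
      have := slope_neg β (le_refl 0) hxy hy.le
      rw [J_zero, mul_zero, add_zero, zero_sub, zero_sub] at this
      exact this
    have hmain : ENNReal.ofReal (z - x) * J β y ≤ ENNReal.ofReal (z - y) * J β x := by
      have hxne : ENNReal.ofReal (-x) ≠ 0 :=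
        (ENNReal.ofReal_pos.2 (by linarith : (0:ℝ) < -x)).ne'
      refine (ENNReal.mul_le_mul_iff_right hxne ENNReal.ofReal_ne_top).1 ?_
      calc ENNReal.ofReal (-x) * (ENNReal.ofReal (z - x) * J β y)
          = ENNReal.ofReal (z - x) * (ENNReal.ofReal (-x) * J β y) := by ring
        _ ≤ ENNReal.ofReal (z - x) * (ENNReal.ofReal (-y) * J β x) := mul_le_mul_right h1 _
        _ = ENNReal.ofReal ((z - x) * (-y)) * J β x := by
            rw [ENNReal.ofReal_mul (by linarith : (0:ℝ) ≤ z - x), mul_assoc]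
        _ ≤ ENNReal.ofReal ((z - y) * (-x)) * J β x :=
            mul_le_mul_left (ENNReal.ofReal_le_ofReal (by nlinarith)) _
        _ = ENNReal.ofReal (-x) * (ENNReal.ofReal (z - y) * J β x) := by
            rw [ENNReal.ofReal_mul (by linarith : (0:ℝ) ≤ z - y)]; ring
    exact hmain.trans le_self_add

lemma J_convex_aux {a b t : ℝ} (hab : a ≤ b) (ht0 : 0 ≤ t) (ht1 : t ≤ 1) :
    J β (t * a + (1 - t) * b)
      ≤ ENNReal.ofReal t * J β a + ENNReal.ofReal (1 - t) * J β b := by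
  rcases eq_or_lt_of_le hab with heq | hab
  · subst heq
    rw [show t * a + (1 - t) * a = a by ring, ← add_mul,
      ← ENNReal.ofReal_add ht0 (by linarith), show t + (1 - t) = 1 by ring,
      ENNReal.ofReal_one, one_mul]
  · set c := t * a + (1 - t) * b with hc
    have hac : a ≤ c := by nlinarith
    have hcb : c ≤ b := by nlinarith
    have h := J_slope β hac hcb
    have hbc : b - c = t * (b - a) := by rw [hc]; ring
    have hca : c - a = (1 - t) * (b - a) := by rw [hc]; ring
    have hbane : ENNReal.ofReal (b - a) ≠ 0 :=
      (ENNReal.ofReal_pos.2 (by linarith : (0:ℝ) < b - a)).ne'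
    refine (ENNReal.mul_le_mul_iff_right hbane ENNReal.ofReal_ne_top).1 ?_
    calc ENNReal.ofReal (b - a) * J β c
        ≤ ENNReal.ofReal (b - c) * J β a + ENNReal.ofReal (c - a) * J β b := h
      _ = ENNReal.ofReal (b - a) * (ENNReal.ofReal t * J β a
            + ENNReal.ofReal (1 - t) * J β b) := by
          rw [hbc, hca, ENNReal.ofReal_mul ht0,
            ENNReal.ofReal_mul (by linarith : (0:ℝ) ≤ 1 - t)]
          ring

lemma J_convex (a b t : ℝ) (ht0 : 0 ≤ t) (ht1 : t ≤ 1) :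
    J β (t * a + (1 - t) * b)
      ≤ ENNReal.ofReal t * J β a + ENNReal.ofReal (1 - t) * J β b := by
  rcases le_total a b with hab | hab
  · exact J_convex_aux β hab ht0 ht1
  · have h := J_convex_aux β hab (by linarith : (0:ℝ) ≤ 1 - t) (by linarith)
    rw [show (1 - (1 - t)) = t by ring] at h
    rw [show t * a + (1 - t) * b = (1 - t) * b + t * a by ring]
    exact h.trans_eq (add_comm _ _)


lemma u_lt_of_pos {x : ℝ} (hx : 0 < x) (n : ℕ) :
    0 < x - x / ((n : ℝ) + 2) ∧ x - x / ((n : ℝ) + 2) < x := by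
  have h2 : (0:ℝ) < (n : ℝ) + 2 := by positivity
  have hd : 0 < x / ((n : ℝ) + 2) := div_pos hx h2
  constructor
  · have : x / ((n : ℝ) + 2) < x := by
      rw [div_lt_iff₀ h2]; nlinarith
    linarith
  · linarith

lemma J_lsc : LowerSemicontinuous (J β) := by
  intro x c hc
  rcases lt_trichotomy x 0 with hx | hx | hx
  · -- x < 0
    set u : ℕ → ℝ := fun n => x - x / ((n : ℝ) + 2) with hu
    have hux : ∀ n, x < u n ∧ u n < 0 := by
      intro n
      have h := u_lt_of_pos (x := -x) (by linarith) n
      have e : (-x) - (-x) / ((n : ℝ) + 2) = -(u n) := by rw [hu]; ring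
      rw [e] at h
      constructor <;> [linarith [h.2]; linarith [h.1]]
    have hmono : Monotone fun n => Ico (u n) (0:ℝ) := by
      intro m n hmn
      refine Ico_subset_Ico ?_ le_rfl
      have h2m : (0:ℝ) < (m : ℝ) + 2 := by positivity
      have h2n : (0:ℝ) < (n : ℝ) + 2 := by positivity
      have hmn' : (m : ℝ) ≤ (n : ℝ) := Nat.cast_le.2 hmn
      have : x / ((m : ℝ) + 2) ≤ x / ((n : ℝ) + 2) := by
        rw [div_le_div_iff₀ h2m h2n]; nlinarith
      simp only [hu]; linarith
    have hun : ⋃ n, Ico (u n) (0:ℝ) = Ioo x 0 := by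
      ext s
      simp only [mem_iUnion, mem_Ico, mem_Ioo]
      constructor
      · rintro ⟨n, h1, h2⟩; exact ⟨lt_of_lt_of_le (hux n).1 h1, h2⟩
      · rintro ⟨h1, h2⟩
        have hsx : 0 < s - x := by linarith
        obtain ⟨n, hn⟩ := exists_nat_gt ((-x) / (s - x))
        refine ⟨n, ?_, h2⟩
        have h2n : (0:ℝ) < (n : ℝ) + 2 := by positivity
        have h3 : (-x) / (s - x) < (n : ℝ) + 2 := by linarith
        have h4 : -x < ((n : ℝ) + 2) * (s - x) := by rwa [div_lt_iff₀ hsx] at h3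
        have h5 : -(x / ((n : ℝ) + 2)) ≤ s - x := by
          rw [← neg_div, div_le_iff₀ h2n]; nlinarith
        simp only [hu]; linarith
    have hmeq : mu β (Ioo x 0) = ⨆ n, mu β (Ico (u n) 0) := by
      rw [← hun]
      exact hmono.measure_iUnion
    have hIoo : c < mu β (Ioo x 0) := by
      have hsub : mu β (Ico x 0) ≤ mu β {x} + mu β (Ioo x 0) := by
        refine le_trans (measure_mono ?_) (measure_union_le _ _)
        intro s hs
        rcases eq_or_lt_of_le hs.1 with h' | h'
        · exact Or.inl (by simp [h'.symm])
        · exact Or.inr ⟨h', hs.2⟩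
      have hsing : mu β {x} = 0 :=
        (withDensity_absolutelyContinuous volume (N β)) Real.volume_singleton
      calc c < J β x := hc
        _ = mu β (Ico x 0) := J_of_nonpos β hx.le
        _ ≤ mu β {x} + mu β (Ioo x 0) := hsub
        _ = mu β (Ioo x 0) := by rw [hsing, zero_add]
    rw [hmeq] at hIoo
    obtain ⟨n, hn⟩ := lt_iSup_iff.1 hIoo
    refine Filter.eventually_of_mem (Iio_mem_nhds (hux n).1) ?_
    intro y hy
    have hy' : y < u n := hy
    have hy0 : y ≤ 0 := le_of_lt (hy'.trans (hux n).2)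
    calc c < mu β (Ico (u n) 0) := hn
      _ ≤ mu β (Ico y 0) := measure_mono (Ico_subset_Ico hy'.le le_rfl)
      _ = J β y := (J_of_nonpos β hy0).symm
  · subst hx
    rw [J_zero] at hc
    exact absurd hc (by simp)
  · -- 0 < x
    set u : ℕ → ℝ := fun n => x - x / ((n : ℝ) + 2) with hu
    have hux : ∀ n, 0 < u n ∧ u n < x := fun n => u_lt_of_pos hx n
    have hmono : Monotone fun n => Ioc (0:ℝ) (u n) := by
      intro m n hmn
      refine Ioc_subset_Ioc le_rfl ?_
      have h2m : (0:ℝ) < (m : ℝ) + 2 := by positivity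
      have h2n : (0:ℝ) < (n : ℝ) + 2 := by positivity
      have hmn' : (m : ℝ) ≤ (n : ℝ) := Nat.cast_le.2 hmn
      have : x / ((n : ℝ) + 2) ≤ x / ((m : ℝ) + 2) := by
        rw [div_le_div_iff₀ h2n h2m]; nlinarith
      simp only [hu]; linarith
    have hun : ⋃ n, Ioc (0:ℝ) (u n) = Ioo 0 x := by
      ext s
      simp only [mem_iUnion, mem_Ioc, mem_Ioo]
      constructor
      · rintro ⟨n, h1, h2⟩; exact ⟨h1, lt_of_le_of_lt h2 (hux n).2⟩
      · rintro ⟨h1, h2⟩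
        have hsx : 0 < x - s := by linarith
        obtain ⟨n, hn⟩ := exists_nat_gt (x / (x - s))
        refine ⟨n, h1, ?_⟩
        have h2n : (0:ℝ) < (n : ℝ) + 2 := by positivity
        have h3 : x / (x - s) < (n : ℝ) + 2 := by linarith
        have h4 : x < ((n : ℝ) + 2) * (x - s) := by rwa [div_lt_iff₀ hsx] at h3
        have h6 : x / ((n : ℝ) + 2) ≤ x - s := by rw [div_le_iff₀ h2n]; nlinarith
        simp only [hu]; linarith
    have hmeq : nu β (Ioo 0 x) = ⨆ n, nu β (Ioc 0 (u n)) := by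
      rw [← hun]
      exact hmono.measure_iUnion
    have hIoo : c < nu β (Ioo 0 x) := by
      have hsub : nu β (Ioc 0 x) ≤ nu β (Ioo 0 x) + nu β {x} := by
        refine le_trans (measure_mono ?_) (measure_union_le _ _)
        intro s hs
        rcases eq_or_lt_of_le hs.2 with h' | h'
        · exact Or.inr (by simp [h'])
        · exact Or.inl ⟨hs.1, h'⟩
      have hsing : nu β {x} = 0 :=
        (withDensity_absolutelyContinuous volume (P β)) Real.volume_singleton
      calc c < J β x := hc
        _ = nu β (Ioc 0 x) := J_of_nonneg β hx.le
        _ ≤ nu β (Ioo 0 x) + nu β {x} := hsub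
        _ = nu β (Ioo 0 x) := by rw [hsing, add_zero]
    rw [hmeq] at hIoo
    obtain ⟨n, hn⟩ := lt_iSup_iff.1 hIoo
    refine Filter.eventually_of_mem (Ioi_mem_nhds (hux n).2) ?_
    intro y hy
    have hy' : u n < y := hy
    have hy0 : 0 ≤ y := le_of_lt ((hux n).1.trans hy')
    calc c < nu β (Ioc 0 (u n)) := hn
      _ ≤ nu β (Ioc 0 y) := measure_mono (Ioc_subset_Ioc le_rfl hy'.le)
      _ = J β y := (J_of_nonneg β hy0).symm


lemma w_nonneg (hm : IsMonotoneGraph β) (h0 : (0, 0) ∈ β) {r w : ℝ}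
    (hrw : (r, w) ∈ β) (hr : 0 < r) : 0 ≤ w := by
  have h := hm (r, w) hrw (0, 0) h0
  simp only at h
  nlinarith

lemma w_nonpos (hm : IsMonotoneGraph β) (h0 : (0, 0) ∈ β) {r w : ℝ}
    (hrw : (r, w) ∈ β) (hr : r < 0) : w ≤ 0 := by
  have h := hm (r, w) hrw (0, 0) h0
  simp only at h
  nlinarith

lemma J_ne_top (hm : IsMonotoneGraph β) {r w : ℝ} (hrw : (r, w) ∈ β) :
    J β r ≠ ⊤ := by
  rcases lt_trichotomy r 0 with hr | hr | hr
  · rw [J_of_nonpos β hr.le]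
    have hle : mu β (Ico r 0) ≤ ENNReal.ofReal (-w) * ENNReal.ofReal (0 - r) :=
      wd_Ico_le (N β) fun s hs => N_le β hm hrw hs.1
    exact ne_top_of_le_ne_top (ENNReal.mul_ne_top ENNReal.ofReal_ne_top ENNReal.ofReal_ne_top) hle
  · rw [hr, J_zero]; exact ENNReal.zero_ne_top
  · rw [J_of_nonneg β hr.le]
    have hle : nu β (Ioc 0 r) ≤ ENNReal.ofReal w * ENNReal.ofReal (r - 0) :=
      wd_Ioc_le (P β) fun s hs => P_le β hm hrw hs.2
    exact ne_top_of_le_ne_top (ENNReal.mul_ne_top ENNReal.ofReal_ne_top ENNReal.ofReal_ne_top) hle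

lemma ofReal_mul_toReal (w d : ℝ) (hd : 0 ≤ d) (hw : 0 ≤ w) :
    (ENNReal.ofReal w * ENNReal.ofReal d).toReal = w * d := by
  rw [← ENNReal.ofReal_mul hw, ENNReal.toReal_ofReal (mul_nonneg hw hd)]

lemma subgrad (hm : IsMonotoneGraph β) (h0 : (0, 0) ∈ β) {r w t : ℝ}
    (hrw : (r, w) ∈ β) (hrfin : J β r ≠ ⊤) (htfin : J β t ≠ ⊤) :
    (J β r).toReal + w * (t - r) ≤ (J β t).toReal := by
  rcases eq_or_ne r t with rfl | hrt
  · simp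
  rcases le_or_gt 0 r with hr | hr
  · rcases le_or_gt r t with hrt' | htr'
    · -- case 1 : 0 ≤ r ≤ t
      have hJt : J β t = J β r + nu β (Ioc r t) := J_add_pos β hr hrt'
      have hfin : nu β (Ioc r t) ≠ ⊤ := by
        intro h; rw [hJt, h, add_top] at htfin; exact htfin rfl
      have hge : ENNReal.ofReal w * ENNReal.ofReal (t - r) ≤ nu β (Ioc r t) :=
        wd_Ioc_ge (Pmeas β) fun s hs => P_ge β hrw hs.1.le
      have htR : (J β t).toReal = (J β r).toReal + (nu β (Ioc r t)).toReal := by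
        rw [hJt, ENNReal.toReal_add hrfin hfin]
      have hlow : w * (t - r) ≤ (nu β (Ioc r t)).toReal := by
        rcases le_or_gt w 0 with hw | hw
        · have : w * (t - r) ≤ 0 := mul_nonpos_of_nonpos_of_nonneg hw (by linarith)
          exact this.trans ENNReal.toReal_nonneg
        · calc w * (t - r) = (ENNReal.ofReal w * ENNReal.ofReal (t - r)).toReal :=
                (ofReal_mul_toReal w (t - r) (by linarith) hw.le).symm
            _ ≤ _ := ENNReal.toReal_mono hfin hge
      linarith
    · rcases le_or_gt 0 t with ht | ht
      · -- case 2 : 0 ≤ t < r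
        have h0r : 0 < r := lt_of_le_of_lt ht htr'
        have hw : 0 ≤ w := w_nonneg β hm h0 hrw h0r
        have hJr : J β r = J β t + nu β (Ioc t r) := J_add_pos β ht htr'.le
        have hfin : nu β (Ioc t r) ≠ ⊤ := by
          intro h; rw [hJr, h, add_top] at hrfin; exact hrfin rfl
        have hle : nu β (Ioc t r) ≤ ENNReal.ofReal w * ENNReal.ofReal (r - t) :=
          wd_Ioc_le (P β) fun s hs => P_le β hm hrw hs.2
        have hrR : (J β r).toReal = (J β t).toReal + (nu β (Ioc t r)).toReal := by
          rw [hJr, ENNReal.toReal_add htfin hfin]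
        have hup : (nu β (Ioc t r)).toReal ≤ w * (r - t) := by
          calc (nu β (Ioc t r)).toReal
              ≤ (ENNReal.ofReal w * ENNReal.ofReal (r - t)).toReal :=
                ENNReal.toReal_mono (ENNReal.mul_ne_top ENNReal.ofReal_ne_top
                  ENNReal.ofReal_ne_top) hle
            _ = w * (r - t) := ofReal_mul_toReal w (r - t) (by linarith) hw
        nlinarith
      · -- case 5 : t < 0 ≤ r, r ≠ t; if r = 0 then t < r ≤ 0 handled below as case 4 style
        rcases eq_or_lt_of_le hr with hr0 | hr0
        · -- r = 0, t < 0 : case 4 with t ≤ r ≤ 0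
          have hJt : J β t = J β r + mu β (Ico t r) := J_add_neg β htr'.le (le_of_eq hr0.symm)
          have hfin : mu β (Ico t r) ≠ ⊤ := by
            intro h; rw [hJt, h, add_top] at htfin; exact htfin rfl
          have hge : ENNReal.ofReal (-w) * ENNReal.ofReal (r - t) ≤ mu β (Ico t r) :=
            wd_Ico_ge (Nmeas β) fun s hs => N_ge β hrw hs.2.le
          have htR : (J β t).toReal = (J β r).toReal + (mu β (Ico t r)).toReal := by
            rw [hJt, ENNReal.toReal_add hrfin hfin]
          have hlow : (-w) * (r - t) ≤ (mu β (Ico t r)).toReal := by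
            rcases le_or_gt (-w) 0 with hw | hw
            · have : (-w) * (r - t) ≤ 0 := mul_nonpos_of_nonpos_of_nonneg hw (by linarith)
              exact this.trans ENNReal.toReal_nonneg
            · calc (-w) * (r - t) = (ENNReal.ofReal (-w) * ENNReal.ofReal (r - t)).toReal :=
                  (ofReal_mul_toReal (-w) (r - t) (by linarith) hw.le).symm
                _ ≤ _ := ENNReal.toReal_mono hfin hge
          nlinarith
        · -- 0 < r, t < 0
          have hw : 0 ≤ w := w_nonneg β hm h0 hrw hr0
          have hJrle : (J β r).toReal ≤ w * r := by
            rw [J_of_nonneg β hr]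
            have hle : nu β (Ioc 0 r) ≤ ENNReal.ofReal w * ENNReal.ofReal (r - 0) :=
              wd_Ioc_le (P β) fun s hs => P_le β hm hrw hs.2
            calc (nu β (Ioc 0 r)).toReal
                ≤ (ENNReal.ofReal w * ENNReal.ofReal (r - 0)).toReal :=
                  ENNReal.toReal_mono (ENNReal.mul_ne_top ENNReal.ofReal_ne_top
                    ENNReal.ofReal_ne_top) hle
              _ = w * (r - 0) := ofReal_mul_toReal w (r - 0) (by linarith) hw
              _ = w * r := by ring
          have hJtpos : (0:ℝ) ≤ (J β t).toReal := ENNReal.toReal_nonneg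
          nlinarith
  · -- r < 0
    have hw : w ≤ 0 := w_nonpos β hm h0 hrw hr
    rcases le_or_gt t r with htr | hrt'
    · -- case 4 : t ≤ r < 0
      have hJt : J β t = J β r + mu β (Ico t r) := J_add_neg β htr hr.le
      have hfin : mu β (Ico t r) ≠ ⊤ := by
        intro h; rw [hJt, h, add_top] at htfin; exact htfin rfl
      have hge : ENNReal.ofReal (-w) * ENNReal.ofReal (r - t) ≤ mu β (Ico t r) :=
        wd_Ico_ge (Nmeas β) fun s hs => N_ge β hrw hs.2.le
      have htR : (J β t).toReal = (J β r).toReal + (mu β (Ico t r)).toReal := by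
        rw [hJt, ENNReal.toReal_add hrfin hfin]
      have hlow : (-w) * (r - t) ≤ (mu β (Ico t r)).toReal := by
        calc (-w) * (r - t) = (ENNReal.ofReal (-w) * ENNReal.ofReal (r - t)).toReal :=
            (ofReal_mul_toReal (-w) (r - t) (by linarith) (by linarith)).symm
          _ ≤ _ := ENNReal.toReal_mono hfin hge
      nlinarith
    · rcases le_or_gt t 0 with ht | ht
      · -- case 3 : r < t ≤ 0
        have hJr : J β r = J β t + mu β (Ico r t) := J_add_neg β hrt'.le ht
        have hfin : mu β (Ico r t) ≠ ⊤ := by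
          intro h; rw [hJr, h, add_top] at hrfin; exact hrfin rfl
        have hle : mu β (Ico r t) ≤ ENNReal.ofReal (-w) * ENNReal.ofReal (t - r) :=
          wd_Ico_le (N β) fun s hs => N_le β hm hrw hs.1
        have hrR : (J β r).toReal = (J β t).toReal + (mu β (Ico r t)).toReal := by
          rw [hJr, ENNReal.toReal_add htfin hfin]
        have hup : (mu β (Ico r t)).toReal ≤ (-w) * (t - r) := by
          calc (mu β (Ico r t)).toReal
              ≤ (ENNReal.ofReal (-w) * ENNReal.ofReal (t - r)).toReal :=
                ENNReal.toReal_mono (ENNReal.mul_ne_top ENNReal.ofReal_ne_top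
                  ENNReal.ofReal_ne_top) hle
            _ = (-w) * (t - r) := ofReal_mul_toReal (-w) (t - r) (by linarith) (by linarith)
        nlinarith
      · -- case 6 : r < 0 < t
        have hJrle : (J β r).toReal ≤ w * r := by
          rw [J_of_nonpos β hr.le]
          have hle : mu β (Ico r 0) ≤ ENNReal.ofReal (-w) * ENNReal.ofReal (0 - r) :=
            wd_Ico_le (N β) fun s hs => N_le β hm hrw hs.1
          calc (mu β (Ico r 0)).toReal
              ≤ (ENNReal.ofReal (-w) * ENNReal.ofReal (0 - r)).toReal :=
                ENNReal.toReal_mono (ENNReal.mul_ne_top ENNReal.ofReal_ne_top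
                  ENNReal.ofReal_ne_top) hle
            _ = (-w) * (0 - r) := ofReal_mul_toReal (-w) (0 - r) (by linarith) (by linarith)
            _ = w * r := by ring
        have hJtpos : (0:ℝ) ≤ (J β t).toReal := ENNReal.toReal_nonneg
        nlinarith

end MMGAux


/-- Every maximal monotone graph `β` in `ℝ × ℝ` with `(0,0) ∈ β` is the graph of
the subdifferential of a nonnegative, convex, l.s.c. function `j` with `j 0 = 0`:
`(r, w) ∈ β` iff `j r < ∞` and `j t ≥ j r + w (t - r)` for all `t`
(the latter inequality being automatic at points where `j t = ∞`). -/
theorem maximal_monotone_graph_eq_subdifferential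
    (β : Set (ℝ × ℝ)) (hβ : IsMaximalMonotoneGraph β) (h0 : (0, 0) ∈ β) :
    ∃ j : ℝ → ℝ≥0∞,
      (∀ a b t : ℝ, 0 ≤ t → t ≤ 1 →
        j (t * a + (1 - t) * b) ≤ ENNReal.ofReal t * j a + ENNReal.ofReal (1 - t) * j b) ∧
      LowerSemicontinuous j ∧
      j 0 = 0 ∧
      ∀ r w : ℝ, (r, w) ∈ β ↔
        (j r ≠ ⊤ ∧ ∀ t : ℝ, j t ≠ ⊤ → (j r).toReal + w * (t - r) ≤ (j t).toReal) := by
  obtain ⟨hm, hmax⟩ := hβ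
  refine ⟨MMGAux.J β, fun a b t ht0 ht1 => MMGAux.J_convex β a b t ht0 ht1,
    MMGAux.J_lsc β, MMGAux.J_zero β, fun r w => ⟨fun hrw => ?_, fun h => ?_⟩⟩
  · exact ⟨MMGAux.J_ne_top β hm hrw, fun t ht =>
      MMGAux.subgrad β hm h0 hrw (MMGAux.J_ne_top β hm hrw) ht⟩
  · obtain ⟨hfin, hsub⟩ := h
    have hmono' : IsMonotoneGraph (insert (r, w) β) := by
      rintro p hp q hq
      rcases Set.mem_insert_iff.1 hp with hp' | hp' <;>
        rcases Set.mem_insert_iff.1 hq with hq' | hq'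
      · subst hp'; subst hq'; simp
      · subst hp'
        obtain ⟨hqfin, hqsub⟩ : MMGAux.J β q.1 ≠ ⊤ ∧ ∀ t : ℝ, MMGAux.J β t ≠ ⊤ →
            (MMGAux.J β q.1).toReal + q.2 * (t - q.1) ≤ (MMGAux.J β t).toReal :=
          ⟨MMGAux.J_ne_top β hm hq', fun t ht =>
            MMGAux.subgrad β hm h0 hq' (MMGAux.J_ne_top β hm hq') ht⟩
        have h1 := hsub q.1 hqfin
        have h2 := hqsub r hfin
        simp only
        nlinarith
      · subst hq'
        obtain ⟨hpfin, hpsub⟩ : MMGAux.J β p.1 ≠ ⊤ ∧ ∀ t : ℝ, MMGAux.J β t ≠ ⊤ →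
            (MMGAux.J β p.1).toReal + p.2 * (t - p.1) ≤ (MMGAux.J β t).toReal :=
          ⟨MMGAux.J_ne_top β hm hp', fun t ht =>
            MMGAux.subgrad β hm h0 hp' (MMGAux.J_ne_top β hm hp') ht⟩
        have h1 := hsub p.1 hpfin
        have h2 := hpsub r hfin
        simp only
        nlinarith
      · exact hm p hp' q hq'
    have := hmax (insert (r, w) β) (Set.subset_insert _ _) hmono'
    rw [← this]
    exact Set.mem_insert _ _
end
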